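/- arXiv:1312.3002 — 2 statements merged into one kernel-verified Lean document; each statement's English description precedes it below -/
import Mathlib

section
/- Let (A_1,...,A_n) and (B_1,...,B_m) be nonempty sequences of words from W_ω with maximal index collections (g_1,...,g_r) and (h_1,...,h_t) respectively. Let k = max({0} ∪ {i | 1 ≤ i ≤ r and B_{h_1} ≾ A_{g_i}}). Then the (n+m)-bounded index collection (g_1,...,g_k, n+h_1,...,n+h_t) is maximal for the concatenated sequence (A_1,...,A_n, B_1,...,B_m). -/
open scoped Classical

/-- Words: finite strings over the alphabet of natural numbers. -/
abbrev Word := List ℕ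

/-- Lexicographic "not greater" comparison of finite sequences of words,
where entries are compared with the preorder `r`. -/
def LexLe (r : Word → Word → Prop) (xs ys : List Word) : Prop :=
  (xs.length ≤ ys.length ∧ ∀ i < xs.length,
      r (xs.getD i []) (ys.getD i []) ∧ r (ys.getD i []) (xs.getD i []))
  ∨ ∃ s, s < xs.length ∧ s < ys.length ∧
      (∀ i < s, r (xs.getD i []) (ys.getD i []) ∧ r (ys.getD i []) (xs.getD i [])) ∧
      r (xs.getD s []) (ys.getD s []) ∧ ¬ r (ys.getD s []) (xs.getD s [])

/-- `M` is a lexicographically maximal subsequence of `xs` (w.r.t. entry preorder `r`). -/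
def IsLexMax (r : Word → Word → Prop) (xs M : List Word) : Prop :=
  M.Sublist xs ∧ ∀ N : List Word, N.Sublist xs → LexLe r N M

/-- Fuelled version of the recursively defined preorder `≾` on words:
`Λ ≾ Λ`; and if `n` is the minimal symbol of `A ++ B`, split `A` and `B` into
blocks at `n` and compare the lexicographically maximal subsequences of blocks. -/
def leAux : ℕ → Word → Word → Prop
  | 0, A, B => A = [] ∧ B = []
  | (fuel+1), A, B =>
      (A = [] ∧ B = []) ∨
      (∀ m, (A ++ B).min? = some m →
        ∀ MA MB : List Word, IsLexMax (leAux fuel) (A.splitOn m) MA →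
          IsLexMax (leAux fuel) (B.splitOn m) MB →
          LexLe (leAux fuel) MA MB)

/-- The preorder `≾` on words (the fuel `|A|+|B|+1` suffices for the recursion). -/
def Wle (A B : Word) : Prop := leAux (A.length + B.length + 1) A B

/-- The equivalence `∼`: `A ≾ B` and `B ≾ A`. -/
def Wequiv (A B : Word) : Prop := Wle A B ∧ Wle B A

/-- The strict relation `≺`: `A ≾ B` and not `B ≾ A`. -/
def Wlt (A B : Word) : Prop := Wle A B ∧ ¬ Wle B A

/-- Fuelled version of the normal form predicate `NF`. -/
def NFAux : ℕ → Word → Prop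
  | 0, A => A = []
  | (fuel+1), A => A = [] ∨ ∀ m, A.min? = some m →
      (A.splitOn m).Chain' (fun x y => Wle y x) ∧ ∀ b ∈ A.splitOn m, NFAux fuel b

/-- `A` is in normal form. -/
def InNF (A : Word) : Prop := NFAux A.length A

/-- `◇ₖ A`: the normal form of the word `A` with symbol `k` appended. -/
noncomputable def diamond (k : ℕ) (A : Word) : Word :=
  if h : ∃ B, InNF B ∧ Wequiv B (A ++ [k]) then h.choose else []

/-- Fuelled version of the ordinal value functions `o_n` on normal-form words in `S_n`. -/
noncomputable def oAux : ℕ → ℕ → Word → Ordinal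
  | 0, _, _ => 0
  | (fuel+1), n, A =>
      if A.all (· = n) then (A.length : Ordinal)
      else ((A.splitOn n).map (fun b => Ordinal.omega0 ^ oAux fuel (n+1) b)).foldr (· + ·) 0

/-- The ordinal value function `o_n : NF ∩ S_n → Ordinals`. -/
noncomputable def oW (n : ℕ) (A : Word) : Ordinal :=
  oAux (A.foldr max 0 + A.length + 1) n A

/-- The towers of `ω`-exponentiations: `ω_0 = 1`, `ω_{n+1} = ω ^ ω_n`. -/
noncomputable def omegaTower : ℕ → Ordinal
  | 0 => 1
  | (n+1) => Ordinal.omega0 ^ omegaTower n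

/-- `ε₀`, the supremum of the `ω`-towers. -/
noncomputable def eps0 : Ordinal := ⨆ n : ℕ, omegaTower n

/-- The function `ψ` on ordinals: `ψ 0 = ω`, and for `α > 0` with Cantor normal form
`ω^{α_1}+⋯+ω^{α_n}` (non-increasing exponents), `ψ α = ω^{α_1}+⋯+ω^{α_{n-1}}+ω^{α_n+1}`. -/
noncomputable def psi (α : Ordinal) : Ordinal :=
  match (Ordinal.CNF Ordinal.omega0 α).getLast? with
  | none => Ordinal.omega0
  | some p =>
      ((Ordinal.CNF Ordinal.omega0 α).dropLast).foldr
        (fun q r => Ordinal.omega0 ^ q.1 * q.2 + r) 0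
      + (Ordinal.omega0 ^ p.1 * (p.2 - 1) + Ordinal.omega0 ^ (p.1 + 1))

/-- The standard fundamental sequences `α[n]` for limit ordinals below `ε₀`
(junk values elsewhere). -/
noncomputable def fundSeq (α : Ordinal) (n : ℕ) : Ordinal :=
  match (Ordinal.CNF Ordinal.omega0 α).getLast? with
  | none => 0
  | some p =>
    let pre := ((Ordinal.CNF Ordinal.omega0 α).dropLast).foldr
        (fun q r => Ordinal.omega0 ^ q.1 * q.2 + r) 0
      + Ordinal.omega0 ^ p.1 * (p.2 - 1)
    if p.1 = 0 then 0
    else if h : ∃ e', p.1 = e' + 1 then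
      pre + Ordinal.omega0 ^ h.choose * ((n : Ordinal) + 1)
    else if hlt : p.1 < α then pre + Ordinal.omega0 ^ (fundSeq p.1 n) else 0
termination_by α
decreasing_by exact hlt

/-- The relation `R`: `α R β` iff `β = α + 1`, or `β` is a limit and `α = β[n]` for some `n`. -/
def Rrel (α β : Ordinal) : Prop :=
  β = α + 1 ∨ (Order.IsSuccLimit β ∧ ∃ n : ℕ, α = fundSeq β n)
def IndexColl (n : ℕ) (s : List ℕ) : Prop :=
  s.Chain' (· < ·) ∧ ∀ i ∈ s, 1 ≤ i ∧ i ≤ n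

def SubseqOf (L : List Word) (s : List ℕ) : List Word :=
  s.map (fun i => L.getD (i - 1) [])

def IsMaxColl (L : List Word) (s : List ℕ) : Prop :=
  IndexColl L.length s ∧ ∀ N : List Word, N.Sublist L → LexLe Wle N (SubseqOf L s)

namespace CM
open List

variable {r r' : Word → Word → Prop}

lemma getD_mem {L : List Word} {i : ℕ} (h : i < L.length) : L.getD i [] ∈ L := by
  rw [List.getD_eq_getElem _ _ h]; exact List.getElem_mem h

lemma lexLe_nil_left (Y : List Word) : LexLe r [] Y := Or.inl ⟨Nat.zero_le _, by simp⟩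

lemma not_lexLe_nil {X : List Word} (hX : X ≠ []) : ¬ LexLe r X [] := by
  rintro (⟨hlen, -⟩ | ⟨s, -, hs2, -⟩)
  · exact hX (List.eq_nil_of_length_eq_zero (Nat.le_zero.mp (by simpa using hlen)))
  · simp at hs2

lemma lexLe_find {X Y : List Word} (c : ℕ) (hcX : c ≤ X.length) (hcY : c ≤ Y.length)
    (h : ∀ i, i < c → r (X.getD i []) (Y.getD i []))
    (hbad : ∃ s, s < c ∧ ¬ r (Y.getD s []) (X.getD s [])) :
    LexLe r X Y := by
  classical
  have hs := Nat.find_spec hbad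
  set s := Nat.find hbad with hsdef
  refine Or.inr ⟨s, lt_of_lt_of_le hs.1 hcX, lt_of_lt_of_le hs.1 hcY, ?_, h _ hs.1, hs.2⟩
  intro i hi
  have hmin := Nat.find_min hbad hi
  push_neg at hmin
  exact ⟨h i (lt_trans hi hs.1), hmin (lt_trans hi hs.1)⟩

lemma lexLe_of_pointwise {X Y : List Word} (hlen : X.length ≤ Y.length)
    (h : ∀ i, i < X.length → r (X.getD i []) (Y.getD i [])) : LexLe r X Y := by
  by_cases hbad : ∃ s, s < X.length ∧ ¬ r (Y.getD s []) (X.getD s [])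
  · exact lexLe_find X.length le_rfl hlen h hbad
  · push_neg at hbad
    exact Or.inl ⟨hlen, fun i hi => ⟨h i hi, hbad i hi⟩⟩

lemma lexLe_of_strict {X Y : List Word} (c : ℕ) (hcX : c < X.length) (hcY : c < Y.length)
    (h : ∀ i, i ≤ c → r (X.getD i []) (Y.getD i []))
    (hstr : ¬ r (Y.getD c []) (X.getD c [])) : LexLe r X Y :=
  lexLe_find (c+1) hcX hcY (fun i hi => h i (Nat.lt_succ_iff.mp hi)) ⟨c, Nat.lt_succ_self c, hstr⟩

lemma lexLe_mutual {X Y : List Word} (hXY : LexLe r X Y) (hYX : LexLe r Y X) :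
    X.length = Y.length ∧ ∀ i, i < X.length →
      r (X.getD i []) (Y.getD i []) ∧ r (Y.getD i []) (X.getD i []) := by
  rcases hXY with ⟨l1, h1⟩ | ⟨s, hsX, hsY, hpre, hle, hnot⟩
  · rcases hYX with ⟨l2, h2⟩ | ⟨s, hsY, hsX, hpre, hle, hnot⟩
    · exact ⟨le_antisymm l1 l2, h1⟩
    · exact absurd (h1 s hsX).1 hnot
  · rcases hYX with ⟨l2, h2⟩ | ⟨t, htY, htX, hpre2, hle2, hnot2⟩
    · exact absurd (h2 s hsY).1 hnot
    · rcases lt_trichotomy s t with h | h | h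
      · exact absurd (hpre2 s h).1 hnot
      · subst h; exact absurd hle2 hnot
      · exact absurd (hpre t h).1 hnot2

lemma lexLe_trans {X Y Z : List Word}
    (htr : ∀ a b c : Word, (a ∈ X ∨ a ∈ Y ∨ a ∈ Z) → (b ∈ X ∨ b ∈ Y ∨ b ∈ Z) →
      (c ∈ X ∨ c ∈ Y ∨ c ∈ Z) → r a b → r b c → r a c)
    (hXY : LexLe r X Y) (hYZ : LexLe r Y Z) : LexLe r X Z := by
  have memX : ∀ {i}, i < X.length → (X.getD i [] ∈ X ∨ X.getD i [] ∈ Y ∨ X.getD i [] ∈ Z) :=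
    fun h => Or.inl (getD_mem h)
  have memY : ∀ {i}, i < Y.length → (Y.getD i [] ∈ X ∨ Y.getD i [] ∈ Y ∨ Y.getD i [] ∈ Z) :=
    fun h => Or.inr (Or.inl (getD_mem h))
  have memZ : ∀ {i}, i < Z.length → (Z.getD i [] ∈ X ∨ Z.getD i [] ∈ Y ∨ Z.getD i [] ∈ Z) :=
    fun h => Or.inr (Or.inr (getD_mem h))
  rcases hXY with ⟨l1, h1⟩ | ⟨s, hsX, hsY, hpre1, hle1, hnot1⟩
  · rcases hYZ with ⟨l2, h2⟩ | ⟨t, htY, htZ, hpre2, hle2, hnot2⟩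
    · refine Or.inl ⟨le_trans l1 l2, fun i hi => ?_⟩
      have hiY := lt_of_lt_of_le hi l1
      have hiZ := lt_of_lt_of_le hiY l2
      exact ⟨htr _ _ _ (memX hi) (memY hiY) (memZ hiZ) (h1 i hi).1 (h2 i hiY).1,
             htr _ _ _ (memZ hiZ) (memY hiY) (memX hi) (h2 i hiY).2 (h1 i hi).2⟩
    · by_cases ht : t < X.length
      · refine Or.inr ⟨t, ht, htZ, fun i hi => ?_, ?_, ?_⟩
        · have hiX := lt_trans hi ht
          have hiY := lt_of_lt_of_le hiX l1
          have hiZ := lt_trans hi htZ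
          exact ⟨htr _ _ _ (memX hiX) (memY hiY) (memZ hiZ) (h1 i hiX).1 (hpre2 i hi).1,
                 htr _ _ _ (memZ hiZ) (memY hiY) (memX hiX) (hpre2 i hi).2 (h1 i hiX).2⟩
        · exact htr _ _ _ (memX ht) (memY htY) (memZ htZ) (h1 t ht).1 hle2
        · intro hc
          exact hnot2 (htr _ _ _ (memZ htZ) (memX ht) (memY htY) hc (h1 t ht).1)
      · push_neg at ht
        refine Or.inl ⟨le_of_lt (lt_of_le_of_lt ht htZ), fun i hi => ?_⟩
        have hit : i < t := lt_of_lt_of_le hi ht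
        have hiY := lt_of_lt_of_le hi l1
        have hiZ := lt_trans hit htZ
        exact ⟨htr _ _ _ (memX hi) (memY hiY) (memZ hiZ) (h1 i hi).1 (hpre2 i hit).1,
               htr _ _ _ (memZ hiZ) (memY hiY) (memX hi) (hpre2 i hit).2 (h1 i hi).2⟩
  · rcases hYZ with ⟨l2, h2⟩ | ⟨t, htY, htZ, hpre2, hle2, hnot2⟩
    · have hsZ := lt_of_lt_of_le hsY l2
      refine Or.inr ⟨s, hsX, hsZ, fun i hi => ?_, ?_, ?_⟩
      · have hiX := lt_trans hi hsX
        have hiY := lt_trans hi hsY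
        have hiZ := lt_trans hi hsZ
        exact ⟨htr _ _ _ (memX hiX) (memY hiY) (memZ hiZ) (hpre1 i hi).1 (h2 i hiY).1,
               htr _ _ _ (memZ hiZ) (memY hiY) (memX hiX) (h2 i hiY).2 (hpre1 i hi).2⟩
      · exact htr _ _ _ (memX hsX) (memY hsY) (memZ hsZ) hle1 (h2 s hsY).1
      · intro hc
        exact hnot1 (htr _ _ _ (memY hsY) (memZ hsZ) (memX hsX) (h2 s hsY).1 hc)
    · rcases lt_trichotomy s t with h | h | h
      · have hsZ := lt_trans h htZ
        refine Or.inr ⟨s, hsX, hsZ, fun i hi => ?_, ?_, ?_⟩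
        · have hiX := lt_trans hi hsX
          have hiY := lt_trans hi hsY
          have hiZ := lt_trans hi hsZ
          exact ⟨htr _ _ _ (memX hiX) (memY hiY) (memZ hiZ) (hpre1 i hi).1 (hpre2 i (lt_trans hi h)).1,
                 htr _ _ _ (memZ hiZ) (memY hiY) (memX hiX) (hpre2 i (lt_trans hi h)).2 (hpre1 i hi).2⟩
        · exact htr _ _ _ (memX hsX) (memY hsY) (memZ hsZ) hle1 (hpre2 s h).1
        · intro hc
          exact hnot1 (htr _ _ _ (memY hsY) (memZ hsZ) (memX hsX) (hpre2 s h).1 hc)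
      · subst h
        refine Or.inr ⟨s, hsX, htZ, fun i hi => ?_, ?_, ?_⟩
        · have hiX := lt_trans hi hsX
          have hiY := lt_trans hi hsY
          have hiZ := lt_trans hi htZ
          exact ⟨htr _ _ _ (memX hiX) (memY hiY) (memZ hiZ) (hpre1 i hi).1 (hpre2 i hi).1,
                 htr _ _ _ (memZ hiZ) (memY hiY) (memX hiX) (hpre2 i hi).2 (hpre1 i hi).2⟩
        · exact htr _ _ _ (memX hsX) (memY hsY) (memZ htZ) hle1 hle2
        · intro hc
          exact hnot1 (htr _ _ _ (memY hsY) (memZ htZ) (memX hsX) hle2 hc)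
      · have htX := lt_trans h hsX
        refine Or.inr ⟨t, htX, htZ, fun i hi => ?_, ?_, ?_⟩
        · have hiX := lt_trans hi htX
          have hiY := lt_trans hi htY
          have hiZ := lt_trans hi htZ
          exact ⟨htr _ _ _ (memX hiX) (memY hiY) (memZ hiZ) (hpre1 i (lt_trans hi h)).1 (hpre2 i hi).1,
                 htr _ _ _ (memZ hiZ) (memY hiY) (memX hiX) (hpre2 i hi).2 (hpre1 i (lt_trans hi h)).2⟩
        · exact htr _ _ _ (memX htX) (memY htY) (memZ htZ) (hpre1 t h).1 hle2
        · intro hc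
          exact hnot2 (htr _ _ _ (memZ htZ) (memX htX) (memY htY) hc (hpre1 t h).1)

lemma lexLe_total {X Y : List Word}
    (htot : ∀ a b, a ∈ X → b ∈ Y → r a b ∨ r b a) :
    LexLe r X Y ∨ LexLe r Y X := by
  classical
  by_cases hbad : ∃ s, s < X.length ∧ s < Y.length ∧
      ¬ (r (X.getD s []) (Y.getD s []) ∧ r (Y.getD s []) (X.getD s []))
  · have hs := Nat.find_spec hbad
    set s := Nat.find hbad with hsdef
    obtain ⟨hX, hY, hne⟩ := hs
    have hpre : ∀ i, i < s → r (X.getD i []) (Y.getD i []) ∧ r (Y.getD i []) (X.getD i []) := by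
      intro i hi
      have hmin := Nat.find_min hbad hi
      push_neg at hmin
      exact hmin (lt_trans hi hX) (lt_trans hi hY)
    rcases htot _ _ (getD_mem hX) (getD_mem hY) with h | h
    · exact Or.inl (Or.inr ⟨s, hX, hY, hpre, h, fun hc => hne ⟨h, hc⟩⟩)
    · exact Or.inr (Or.inr ⟨s, hY, hX, fun i hi => ⟨(hpre i hi).2, (hpre i hi).1⟩, h,
        fun hc => hne ⟨hc, h⟩⟩)
  · push_neg at hbad
    rcases le_total X.length Y.length with hl | hl
    · exact Or.inl (Or.inl ⟨hl, fun i hi => hbad i hi (lt_of_lt_of_le hi hl)⟩)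
    · exact Or.inr (Or.inl ⟨hl, fun i hi => ⟨(hbad i (lt_of_lt_of_le hi hl) hi).2,
        (hbad i (lt_of_lt_of_le hi hl) hi).1⟩⟩)

lemma LexLe_congr {X Y : List Word}
    (h : ∀ a ∈ X, ∀ b ∈ Y, (r a b ↔ r' a b) ∧ (r b a ↔ r' b a)) :
    LexLe r X Y ↔ LexLe r' X Y := by
  have key : ∀ i, i < X.length → i < Y.length →
      ((r (X.getD i []) (Y.getD i []) ↔ r' (X.getD i []) (Y.getD i [])) ∧
       (r (Y.getD i []) (X.getD i []) ↔ r' (Y.getD i []) (X.getD i []))) := by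
    intro i hX hY
    exact h _ (getD_mem hX) _ (getD_mem hY)
  constructor
  · rintro (⟨hlen, hp⟩ | ⟨s, hX, hY, hpre, hle, hnot⟩)
    · exact Or.inl ⟨hlen, fun i hi => ⟨((key i hi (lt_of_lt_of_le hi hlen)).1).mp (hp i hi).1,
        ((key i hi (lt_of_lt_of_le hi hlen)).2).mp (hp i hi).2⟩⟩
    · exact Or.inr ⟨s, hX, hY, fun i hi => ⟨((key i (lt_trans hi hX) (lt_trans hi hY)).1).mp (hpre i hi).1,
        ((key i (lt_trans hi hX) (lt_trans hi hY)).2).mp (hpre i hi).2⟩,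
        ((key s hX hY).1).mp hle, fun hc => hnot (((key s hX hY).2).mpr hc)⟩
  · rintro (⟨hlen, hp⟩ | ⟨s, hX, hY, hpre, hle, hnot⟩)
    · exact Or.inl ⟨hlen, fun i hi => ⟨((key i hi (lt_of_lt_of_le hi hlen)).1).mpr (hp i hi).1,
        ((key i hi (lt_of_lt_of_le hi hlen)).2).mpr (hp i hi).2⟩⟩
    · exact Or.inr ⟨s, hX, hY, fun i hi => ⟨((key i (lt_trans hi hX) (lt_trans hi hY)).1).mpr (hpre i hi).1,
        ((key i (lt_trans hi hX) (lt_trans hi hY)).2).mpr (hpre i hi).2⟩,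
        ((key s hX hY).1).mpr hle, fun hc => hnot (((key s hX hY).2).mp hc)⟩

lemma IsLexMax_congr {xs M : List Word}
    (h : ∀ a ∈ xs, ∀ b ∈ xs, r a b ↔ r' a b) :
    IsLexMax r xs M ↔ IsLexMax r' xs M := by
  have key : ∀ N₁ N₂ : List Word, N₁ <+ xs → N₂ <+ xs → (LexLe r N₁ N₂ ↔ LexLe r' N₁ N₂) := by
    intro N₁ N₂ h1 h2
    exact LexLe_congr (fun a ha b hb => ⟨h a (h1.mem ha) b (h2.mem hb), h b (h2.mem hb) a (h1.mem ha)⟩)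
  constructor
  · rintro ⟨hsub, hmax⟩
    exact ⟨hsub, fun N hN => (key N M hN hsub).mp (hmax N hN)⟩
  · rintro ⟨hsub, hmax⟩
    exact ⟨hsub, fun N hN => (key N M hN hsub).mpr (hmax N hN)⟩

lemma exists_max_list {α : Type _} (R : α → α → Prop) :
    ∀ (l : List α), l ≠ [] →
    (∀ a ∈ l, ∀ b ∈ l, R a b ∨ R b a) →
    (∀ a ∈ l, ∀ b ∈ l, ∀ c ∈ l, R a b → R b c → R a c) →
    ∃ m ∈ l, ∀ a ∈ l, R a m := by
  intro l
  induction l with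
  | nil => intro h; exact absurd rfl h
  | cons a l ih =>
    intro _ htot htr
    rcases eq_or_ne l [] with rfl | hl
    · refine ⟨a, List.mem_cons_self, fun b hb => ?_⟩
      rcases List.mem_cons.mp hb with rfl | h
      · rcases htot b (List.mem_cons_self) b (List.mem_cons_self) with h | h <;> exact h
      · simp at h
    · obtain ⟨m, hm, hmax⟩ := ih hl
        (fun x hx y hy => htot x (List.mem_cons_of_mem _ hx) y (List.mem_cons_of_mem _ hy))
        (fun x hx y hy z hz => htr x (List.mem_cons_of_mem _ hx) y (List.mem_cons_of_mem _ hy)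
          z (List.mem_cons_of_mem _ hz))
      by_cases ham : R a m
      · refine ⟨m, List.mem_cons_of_mem _ hm, fun b hb => ?_⟩
        rcases List.mem_cons.mp hb with rfl | h
        · exact ham
        · exact hmax b h
      · have hma : R m a := by
          rcases htot a (List.mem_cons_self) m (List.mem_cons_of_mem _ hm) with h | h
          · exact absurd h ham
          · exact h
        refine ⟨a, List.mem_cons_self, fun b hb => ?_⟩
        rcases List.mem_cons.mp hb with rfl | h
        · rcases htot b (List.mem_cons_self) b (List.mem_cons_self) with h | h <;> exact h
        · exact htr b (List.mem_cons_of_mem _ h) m (List.mem_cons_of_mem _ hm)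
            a (List.mem_cons_self) (hmax b h) hma

lemma exists_isLexMax (xs : List Word)
    (htot : ∀ a ∈ xs, ∀ b ∈ xs, r a b ∨ r b a)
    (htr : ∀ a ∈ xs, ∀ b ∈ xs, ∀ c ∈ xs, r a b → r b c → r a c) :
    ∃ M, IsLexMax r xs M := by
  obtain ⟨M, hM, hmax⟩ := exists_max_list (LexLe r) xs.sublists
    (by simp [← List.length_pos_iff_ne_nil])
    (fun a ha b hb => lexLe_total (fun x y hx hy =>
      htot x ((List.mem_sublists.mp ha).mem hx) y ((List.mem_sublists.mp hb).mem hy)))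
    (fun a ha b hb c hc => lexLe_trans (fun x y z hx hy hz hxy hyz => by
      have mem : ∀ {w : Word}, (w ∈ a ∨ w ∈ b ∨ w ∈ c) → w ∈ xs := by
        rintro w (h | h | h)
        · exact (List.mem_sublists.mp ha).mem h
        · exact (List.mem_sublists.mp hb).mem h
        · exact (List.mem_sublists.mp hc).mem h
      exact htr x (mem hx) y (mem hy) z (mem hz) hxy hyz))
  exact ⟨M, List.mem_sublists.mp hM, fun N hN => hmax N (List.mem_sublists.mpr hN)⟩


lemma le_sum_of_mem {α : Type _} (f : α → ℕ) {L : List α} {x : α} (hx : x ∈ L) :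
    f x ≤ (L.map f).sum := by
  induction L with
  | nil => simp at hx
  | cons a L ih =>
    rcases List.mem_cons.mp hx with rfl | hx'
    · simp
    · simp only [List.map_cons, List.sum_cons]
      exact le_add_of_nonneg_of_le (Nat.zero_le _) (ih hx')

lemma pair_le_sum {α : Type _} (f : α → ℕ) {L : List α} {x y : α}
    (hx : x ∈ L) (hy : y ∈ L) (hxy : x ≠ y) : f x + f y ≤ (L.map f).sum := by
  induction L with
  | nil => simp at hx
  | cons a L ih =>
    simp only [List.map_cons, List.sum_cons]
    rcases List.mem_cons.mp hx with rfl | hx'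
    · have hy' : y ∈ L := by
        rcases List.mem_cons.mp hy with h | h
        · exact absurd h.symm (by simpa [eq_comm] using hxy)
        · exact h
      exact add_le_add le_rfl (le_sum_of_mem f hy')
    · rcases List.mem_cons.mp hy with rfl | hy'
      · rw [Nat.add_comm]
        exact add_le_add le_rfl (le_sum_of_mem f hx')
      · exact le_add_of_nonneg_of_le (Nat.zero_le _) (ih hx' hy')

lemma splitOn_struct (m : ℕ) (l : List ℕ) :
    ((l.splitOn m).map List.length).sum + l.count m = l.length ∧
    (l.splitOn m).length = l.count m + 1 ∧
    ∀ x ∈ l.splitOn m, ∀ a ∈ x, a ∈ l ∧ a ≠ m := by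
  induction l with
  | nil =>
    refine ⟨by simp, by simp, ?_⟩
    intro x hx a ha
    simp only [List.splitOn_nil, List.mem_singleton] at hx
    subst hx; simp at ha
  | cons b l ih =>
    obtain ⟨h1, h2, h3⟩ := ih
    have hcc : (b :: l).count m = l.count m + (if b = m then 1 else 0) := by
      simp [List.count_cons]
    by_cases hbm : b = m
    · subst hbm
      have hsp : (b :: l).splitOn b = [] :: l.splitOn b := by
        simp [List.splitOn, List.splitOnP_cons]
      refine ⟨?_, ?_, ?_⟩
      · rw [hsp]
        simp only [List.map_cons, List.sum_cons, List.length_nil, List.length_cons,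
          List.count_cons_self]
        omega
      · rw [hsp]
        simp only [List.length_cons, List.count_cons_self]
        omega
      · intro x hx a ha
        rw [hsp] at hx
        rcases List.mem_cons.mp hx with rfl | hx'
        · simp at ha
        · obtain ⟨hal, ham⟩ := h3 x hx' a ha
          exact ⟨List.mem_cons_of_mem _ hal, ham⟩
    · obtain ⟨hd, tl, hht⟩ : ∃ hd tl, l.splitOn m = hd :: tl := by
        rcases h : l.splitOn m with _ | ⟨hd, tl⟩
        · exact absurd h (List.splitOnP_ne_nil _ l)
        · exact ⟨hd, tl, rfl⟩
      have hsp : (b :: l).splitOn m = (b :: hd) :: tl := by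
        simp [List.splitOn, List.splitOnP_cons, hbm]
        rw [show l.splitOnP (· == m) = hd :: tl from hht]
        rfl
      rw [hht] at h1 h2 h3
      refine ⟨?_, ?_, ?_⟩
      · rw [hsp]
        have hc2 : (b :: l).count m = l.count m := List.count_cons_of_ne hbm
        simp only [List.map_cons, List.sum_cons, List.length_cons, hc2]
        simp only [List.map_cons, List.sum_cons] at h1
        omega
      · rw [hsp]
        have hc2 : (b :: l).count m = l.count m := List.count_cons_of_ne hbm
        simp only [List.length_cons, hc2] at *
        omega
      · intro x hx a ha
        rw [hsp] at hx
        rcases List.mem_cons.mp hx with rfl | hx'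
        · rcases List.mem_cons.mp ha with rfl | ha'
          · exact ⟨List.mem_cons_self, hbm⟩
          · obtain ⟨hal, ham⟩ := h3 hd (List.mem_cons_self) a ha'
            exact ⟨List.mem_cons_of_mem _ hal, ham⟩
        · obtain ⟨hal, ham⟩ := h3 x (List.mem_cons_of_mem _ hx') a ha
          exact ⟨List.mem_cons_of_mem _ hal, ham⟩

lemma splitOn_ne_nil (m : ℕ) (l : List ℕ) : l.splitOn m ≠ [] := List.splitOnP_ne_nil _ l

lemma length_block_le {m : ℕ} {l x : List ℕ} (hx : x ∈ l.splitOn m) : x.length ≤ l.length := by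
  have h := (splitOn_struct m l).1
  have := le_sum_of_mem List.length hx
  omega

lemma length_block_lt {m : ℕ} {l x : List ℕ} (hm : m ∈ l) (hx : x ∈ l.splitOn m) :
    x.length < l.length := by
  have h := (splitOn_struct m l).1
  have h2 := le_sum_of_mem List.length hx
  have h3 : 0 < l.count m := List.count_pos_iff.mpr hm
  omega

lemma blocks_disjoint {m : ℕ} {l x y : List ℕ} (hx : x ∈ l.splitOn m) (hy : y ∈ l.splitOn m)
    (hxy : x ≠ y) : x.length + y.length < l.length := by
  have h := (splitOn_struct m l).1
  have h2 := (splitOn_struct m l).2.1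
  have hsum := pair_le_sum List.length hx hy hxy
  have hlen2 : 2 ≤ (l.splitOn m).length := by
    rcases hl : l.splitOn m with _ | ⟨a, _ | ⟨b, t⟩⟩
    · exact absurd hl (splitOn_ne_nil m l)
    · rw [hl] at hx hy
      simp only [List.mem_singleton] at hx hy
      exact absurd (hx.trans hy.symm) hxy
    · simp
  omega

lemma mem_block {m : ℕ} {l x : List ℕ} (hx : x ∈ l.splitOn m) {a : ℕ} (ha : a ∈ x) :
    a ∈ l ∧ a ≠ m := (splitOn_struct m l).2.2 x hx a ha

lemma splitOn_not_mem {m : ℕ} {l : List ℕ} (hm : m ∉ l) : l.splitOn m = [l] := by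
  apply List.splitOnP_eq_single
  intro x hx
  simp only [beq_eq_false_iff_ne, ne_eq]
  intro h
  exact hm (h ▸ hx)

lemma minNat_eq_some_iff {l : List ℕ} {a : ℕ} : l.min? = some a ↔ a ∈ l ∧ ∀ b ∈ l, a ≤ b :=
  List.min?_eq_some_iff

lemma minNat_exists {l : List ℕ} (hl : l ≠ []) : ∃ a, l.min? = some a := by
  cases l with
  | nil => exact absurd rfl hl
  | cons b t => exact ⟨_, List.min?_cons⟩

lemma min?_append_comm (A B : List ℕ) : (A ++ B).min? = (B ++ A).min? := by
  rcases h : (A ++ B).min? with _ | a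
  · rcases hBA : (B ++ A).min? with _ | b
    · rfl
    · obtain ⟨hb1, _⟩ := minNat_eq_some_iff.mp hBA
      rcases eq_or_ne (A ++ B) [] with hnil | hne
      · have : B = [] ∧ A = [] := by
          constructor <;> [exact List.append_eq_nil_iff.mp hnil |>.2; exact List.append_eq_nil_iff.mp hnil |>.1]
        simp [this.1, this.2] at hb1
      · obtain ⟨a, ha⟩ := minNat_exists hne
        rw [ha] at h; exact absurd h (by simp)
  · obtain ⟨h1, h2⟩ := minNat_eq_some_iff.mp h
    symm
    rw [minNat_eq_some_iff]
    constructor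
    · rcases List.mem_append.mp h1 with h' | h'
      · exact List.mem_append.mpr (Or.inr h')
      · exact List.mem_append.mpr (Or.inl h')
    · intro b hb
      rcases List.mem_append.mp hb with h' | h'
      · exact h2 b (List.mem_append.mpr (Or.inr h'))
      · exact h2 b (List.mem_append.mpr (Or.inl h'))

lemma mem_le_foldr_max {l : List ℕ} {a : ℕ} (ha : a ∈ l) : a ≤ l.foldr max 0 := by
  induction l with
  | nil => simp at ha
  | cons b t ih =>
    rcases List.mem_cons.mp ha with rfl | h
    · simp [List.foldr_cons, le_max_iff]
    · simp only [List.foldr_cons, le_max_iff]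
      exact Or.inr (ih h)
def thresh (A B : Word) : ℕ := if A = B then A.length + 1 else A.length + B.length + 1

lemma thresh_pos (A B : Word) : 1 ≤ thresh A B := by unfold thresh; split <;> omega

lemma thresh_le (A B : Word) : thresh A B ≤ A.length + B.length + 1 := by
  unfold thresh; split <;> omega

lemma leAux_succ (f : ℕ) (A B : Word) : leAux (f+1) A B ↔
    ((A = [] ∧ B = []) ∨
      (∀ m, (A ++ B).min? = some m →
        ∀ MA MB : List Word, IsLexMax (leAux f) (A.splitOn m) MA →
          IsLexMax (leAux f) (B.splitOn m) MB →
          LexLe (leAux f) MA MB)) := Iff.rfl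

lemma thresh_ge_left (A B : Word) : A.length + 1 ≤ thresh A B := by
  unfold thresh; split
  · next h => subst h; omega
  · omega

lemma thresh_ge_right (A B : Word) : B.length + 1 ≤ thresh A B := by
  unfold thresh; split
  · next h => subst h; omega
  · omega

lemma thresh_blocks {A B : Word} {m : ℕ} (hm : (A ++ B).min? = some m)
    {x y : Word} (hx : x ∈ A.splitOn m ∨ x ∈ B.splitOn m)
    (hy : y ∈ A.splitOn m ∨ y ∈ B.splitOn m) :
    thresh x y + 1 ≤ thresh A B ∧ thresh x y ≤ A.length + B.length := by
  have hmem : m ∈ A ++ B := (minNat_eq_some_iff.mp hm).1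
  have hthA : A.length + 1 ≤ thresh A B := thresh_ge_left A B
  have hthB : B.length + 1 ≤ thresh A B := thresh_ge_right A B
  have bdA : ∀ {z : Word}, z ∈ A.splitOn m → z.length ≤ A.length := fun h => length_block_le h
  have bdB : ∀ {z : Word}, z ∈ B.splitOn m → z.length ≤ B.length := fun h => length_block_le h
  by_cases hxy : x = y
  · subst hxy
    have hth : thresh x x = x.length + 1 := by unfold thresh; simp
    rcases hx with hxA | hxB
    · by_cases hmA : m ∈ A
      · have := length_block_lt hmA hxA
        constructor <;> omega
      · have hxeq : x = A := by
          rw [splitOn_not_mem hmA] at hxA; simpa using hxA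
        have hmB : m ∈ B := by
          rcases List.mem_append.mp hmem with h | h
          · exact absurd h hmA
          · exact h
        have hBpos : 1 ≤ B.length := List.length_pos_iff.mpr (fun h => by simp [h] at hmB)
        have hAB : A ≠ B := fun h => hmA (h ▸ hmB)
        have h5 : thresh A B = A.length + B.length + 1 := if_neg hAB
        subst hxeq
        constructor <;> omega
    · by_cases hmB : m ∈ B
      · have := length_block_lt hmB hxB
        constructor <;> omega
      · have hxeq : x = B := by
          rw [splitOn_not_mem hmB] at hxB; simpa using hxB
        have hmA : m ∈ A := by
          rcases List.mem_append.mp hmem with h | h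
          · exact h
          · exact absurd h hmB
        have hApos : 1 ≤ A.length := List.length_pos_iff.mpr (fun h => by simp [h] at hmA)
        have hAB : A ≠ B := fun h => hmB (h ▸ hmA)
        have h5 : thresh A B = A.length + B.length + 1 := if_neg hAB
        subst hxeq
        constructor <;> omega
  · have hth : thresh x y = x.length + y.length + 1 := if_neg hxy
    by_cases hcom : (x ∈ A.splitOn m ∧ y ∈ A.splitOn m) ∨ (x ∈ B.splitOn m ∧ y ∈ B.splitOn m)
    · rcases hcom with ⟨hx', hy'⟩ | ⟨hx', hy'⟩
      · have := blocks_disjoint hx' hy' hxy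
        constructor <;> omega
      · have := blocks_disjoint hx' hy' hxy
        constructor <;> omega
    · push_neg at hcom
      have hAB : A ≠ B := by
        intro h; subst h
        rcases hx with h1 | h1 <;> rcases hy with h2 | h2 <;>
          exact absurd h2 (hcom.1 h1)
      have hthAB2 : thresh A B = A.length + B.length + 1 := if_neg hAB
      have hshrink : x.length + y.length + 1 ≤ A.length + B.length := by
        rcases List.mem_append.mp hmem with hmA | hmB
        · rcases hx with h1 | h1 <;> rcases hy with h2 | h2
          · exact absurd h2 (hcom.1 h1)
          · have e1 := length_block_lt hmA h1
            have e2 := bdB h2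
            omega
          · have e1 := length_block_lt hmA h2
            have e2 := bdB h1
            omega
          · exact absurd h2 (hcom.2 h1)
        · rcases hx with h1 | h1 <;> rcases hy with h2 | h2
          · exact absurd h2 (hcom.1 h1)
          · have e1 := length_block_lt hmB h2
            have e2 := bdA h1
            omega
          · have e1 := length_block_lt hmB h1
            have e2 := bdA h2
            omega
          · exact absurd h2 (hcom.2 h1)
      constructor <;> omega

lemma leAux_step : ∀ f, ∀ A B : Word, thresh A B ≤ f → (leAux (f+1) A B ↔ leAux f A B) := by
  intro f
  induction f using Nat.strong_induction_on with
  | _ f ih =>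
    intro A B hf
    have hf1 : 1 ≤ f := le_trans (thresh_pos A B) hf
    obtain ⟨f0, rfl⟩ : ∃ f0, f = f0 + 1 := ⟨f - 1, by omega⟩
    rw [leAux_succ, leAux_succ]
    have key : ∀ m, (A++B).min? = some m →
        ∀ x y : Word, (x ∈ A.splitOn m ∨ x ∈ B.splitOn m) →
          (y ∈ A.splitOn m ∨ y ∈ B.splitOn m) →
          (leAux (f0+1) x y ↔ leAux f0 x y) := by
      intro m hm x y hx hy
      have hb := (thresh_blocks hm hx hy).1
      exact ih f0 (lt_add_one f0) x y (by omega)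
    constructor
    · rintro (h | h)
      · exact Or.inl h
      · refine Or.inr (fun m hm MA MB hMA hMB => ?_)
        have hMA' : IsLexMax (leAux (f0+1)) (A.splitOn m) MA :=
          (IsLexMax_congr (fun a ha b hb => key m hm a b (Or.inl ha) (Or.inl hb))).mpr hMA
        have hMB' : IsLexMax (leAux (f0+1)) (B.splitOn m) MB :=
          (IsLexMax_congr (fun a ha b hb => key m hm a b (Or.inr ha) (Or.inr hb))).mpr hMB
        have := h m hm MA MB hMA' hMB'
        exact (LexLe_congr (fun a ha b hb =>
          ⟨key m hm a b (Or.inl (hMA.1.mem ha)) (Or.inr (hMB.1.mem hb)),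
           key m hm b a (Or.inr (hMB.1.mem hb)) (Or.inl (hMA.1.mem ha))⟩)).mp this
    · rintro (h | h)
      · exact Or.inl h
      · refine Or.inr (fun m hm MA MB hMA hMB => ?_)
        have hMA' : IsLexMax (leAux f0) (A.splitOn m) MA :=
          (IsLexMax_congr (fun a ha b hb => key m hm a b (Or.inl ha) (Or.inl hb))).mp hMA
        have hMB' : IsLexMax (leAux f0) (B.splitOn m) MB :=
          (IsLexMax_congr (fun a ha b hb => key m hm a b (Or.inr ha) (Or.inr hb))).mp hMB
        have := h m hm MA MB hMA' hMB'
        exact (LexLe_congr (fun a ha b hb =>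
          ⟨key m hm a b (Or.inl (hMA'.1.mem ha)) (Or.inr (hMB'.1.mem hb)),
           key m hm b a (Or.inr (hMB'.1.mem hb)) (Or.inl (hMA'.1.mem ha))⟩)).mpr this

lemma leAux_add (A B : Word) (k : ℕ) : ∀ f, thresh A B ≤ f → (leAux (f+k) A B ↔ leAux f A B) := by
  induction k with
  | zero => intro f _; rfl
  | succ k ih =>
    intro f hf
    have h1 : leAux (f + k + 1) A B ↔ leAux (f + k) A B :=
      leAux_step (f + k) A B (le_trans hf (Nat.le_add_right _ _))
    rw [show f + (k+1) = f + k + 1 from rfl, h1, ih f hf]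

lemma leAux_stable {A B : Word} {f g : ℕ} (hf : thresh A B ≤ f) (hg : thresh A B ≤ g) :
    (leAux f A B ↔ leAux g A B) := by
  rcases le_total f g with h | h
  · obtain ⟨k, rfl⟩ : ∃ k, g = f + k := ⟨g - f, by omega⟩
    exact (leAux_add A B k f hf).symm
  · obtain ⟨k, rfl⟩ : ∃ k, f = g + k := ⟨f - g, by omega⟩
    exact leAux_add A B k g hg

lemma Wle_eq_leAux {A B : Word} {f : ℕ} (hf : thresh A B ≤ f) : Wle A B ↔ leAux f A B :=
  leAux_stable (thresh_le A B) hf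

lemma Wle_refl (A : Word) : Wle A A := by
  show leAux (A.length + A.length + 1) A A
  rw [leAux_succ]
  exact Or.inr (fun m hm MA MB hMA hMB => hMB.2 MA hMA.1)

lemma Wle_iff {A B : Word} {m : ℕ} (hm : (A ++ B).min? = some m) :
    Wle A B ↔ ∀ MA MB : List Word, IsLexMax Wle (A.splitOn m) MA →
      IsLexMax Wle (B.splitOn m) MB → LexLe Wle MA MB := by
  have hne : ¬ (A = [] ∧ B = []) := by
    rintro ⟨rfl, rfl⟩
    have := (minNat_eq_some_iff.mp hm).1
    simp at this
  have key : ∀ x y : Word, (x ∈ A.splitOn m ∨ x ∈ B.splitOn m) →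
      (y ∈ A.splitOn m ∨ y ∈ B.splitOn m) →
      (leAux (A.length + B.length) x y ↔ Wle x y) := by
    intro x y hx hy
    have h1 : leAux (A.length + B.length) x y ↔ leAux (x.length + y.length + 1) x y :=
      leAux_stable (thresh_blocks hm hx hy).2 (thresh_le x y)
    exact h1.trans (Iff.of_eq (congrFun (congrFun (congrArg leAux rfl) x) y)).symm |>.trans Iff.rfl
  show leAux (A.length + B.length + 1) A B ↔ _
  rw [leAux_succ]
  constructor
  · intro h MA MB hMA hMB
    rcases h with h | h
    · exact absurd h hne
    · have hMA' : IsLexMax (leAux (A.length + B.length)) (A.splitOn m) MA :=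
        (IsLexMax_congr (fun a ha b hb => key a b (Or.inl ha) (Or.inl hb))).mpr hMA
      have hMB' : IsLexMax (leAux (A.length + B.length)) (B.splitOn m) MB :=
        (IsLexMax_congr (fun a ha b hb => key a b (Or.inr ha) (Or.inr hb))).mpr hMB
      have := h m hm MA MB hMA' hMB'
      exact (LexLe_congr (fun a ha b hb =>
        ⟨key a b (Or.inl (hMA.1.mem ha)) (Or.inr (hMB.1.mem hb)),
         key b a (Or.inr (hMB.1.mem hb)) (Or.inl (hMA.1.mem ha))⟩)).mp this
  · intro h
    refine Or.inr (fun m' hm' MA MB hMA hMB => ?_)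
    have hmm : m' = m := by rw [hm] at hm'; exact (Option.some_inj.mp hm').symm
    subst hmm
    have hMA' : IsLexMax Wle (A.splitOn m') MA :=
      (IsLexMax_congr (fun a ha b hb => key a b (Or.inl ha) (Or.inl hb))).mp hMA
    have hMB' : IsLexMax Wle (B.splitOn m') MB :=
      (IsLexMax_congr (fun a ha b hb => key a b (Or.inr ha) (Or.inr hb))).mp hMB
    have := h MA MB hMA' hMB'
    exact (LexLe_congr (fun a ha b hb =>
      ⟨(key a b (Or.inl (hMA'.1.mem ha)) (Or.inr (hMB'.1.mem hb))).symm,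
       (key b a (Or.inr (hMB'.1.mem hb)) (Or.inl (hMA'.1.mem ha))).symm⟩)).mp this

lemma lexmax_ne_nil {r : Word → Word → Prop} {xs M : List Word} (hxs : xs ≠ [])
    (h : IsLexMax r xs M) : M ≠ [] := by
  rintro rfl
  obtain ⟨z, hz⟩ := List.exists_mem_of_ne_nil xs hxs
  exact not_lexLe_nil (by simp) (h.2 [z] (List.singleton_sublist.mpr hz))

lemma lexmax_singleton {r : Word → Word → Prop} {z : Word} {M : List Word}
    (h : IsLexMax r [z] M) : M = [z] := by
  rcases List.sublist_singleton.mp h.1 with h' | h'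
  · exact absurd h' (lexmax_ne_nil (by simp) h)
  · exact h'

lemma isLexMax_singleton_self {z : Word} (hz : Wle z z) : IsLexMax Wle [z] [z] := by
  refine ⟨List.Sublist.refl _, fun N hN => ?_⟩
  rcases List.sublist_singleton.mp hN with rfl | rfl
  · exact lexLe_nil_left _
  · refine Or.inl ⟨le_rfl, fun i hi => ?_⟩
    have hi' : i = 0 := by simpa [Nat.lt_one_iff] using hi
    subst hi'
    exact ⟨hz, hz⟩

lemma nil_Wle_aux : ∀ (n : ℕ) (X : Word), X.length ≤ n → Wle [] X := by
  intro n
  induction n with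
  | zero =>
    intro X hX
    have : X = [] := List.length_eq_zero_iff.mp (Nat.le_zero.mp hX)
    subst this
    exact Wle_refl []
  | succ n ih =>
    intro X hX
    rcases eq_or_ne X [] with rfl | hXne
    · exact Wle_refl []
    · obtain ⟨m, hm⟩ := minNat_exists (l := [] ++ X) (by simpa using hXne)
      rw [Wle_iff hm]
      intro MA MB hMA hMB
      have hMAeq : MA = [[]] := by
        have h0 : ([] : Word).splitOn m = [[]] := by simp
        rw [h0] at hMA
        exact lexmax_singleton hMA
      subst hMAeq
      have hMBne : MB ≠ [] := lexmax_ne_nil (splitOn_ne_nil m X) hMB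
      have hMBpos : 0 < MB.length := List.length_pos_iff.mpr hMBne
      set b0 := MB.getD 0 [] with hb0
      have hb0mem : b0 ∈ X.splitOn m := hMB.1.mem (getD_mem hMBpos)
      have hmn : m ∈ X := by
        have := (minNat_eq_some_iff.mp hm).1
        simpa using this
      have hlt : b0.length < X.length := length_block_lt hmn hb0mem
      have hwle : Wle [] b0 := ih b0 (by omega)
      by_cases hcb : Wle b0 []
      · refine Or.inl ⟨by simp; omega, fun i hi => ?_⟩
        have hi' : i = 0 := by simpa [Nat.lt_one_iff] using hi
        subst hi'
        exact ⟨hwle, hcb⟩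
      · exact Or.inr ⟨0, by simp, hMBpos, fun i hi => absurd hi (by omega), hwle, hcb⟩

lemma nil_Wle (X : Word) : Wle [] X := nil_Wle_aux X.length X le_rfl

def maxSym (X : Word) : ℕ := X.foldr max 0

lemma foldr_max_le {X : List ℕ} {c : ℕ} (h : ∀ a ∈ X, a ≤ c) : X.foldr max 0 ≤ c := by
  induction X with
  | nil => simp
  | cons a t ih =>
    simp only [List.foldr_cons, max_le_iff]
    exact ⟨h a (List.mem_cons_self), ih (fun b hb => h b (List.mem_cons_of_mem _ hb))⟩

def wt (μ : ℕ) (X : Word) : ℕ := if X = [] then 0 else X.length + (maxSym X + 1 - μ)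

lemma wt_pos {μ : ℕ} {X : Word} (hX : X ≠ []) : 1 ≤ wt μ X := by
  unfold wt
  rw [if_neg hX]
  have := List.length_pos_iff.mpr hX
  omega

lemma wt_block {μ μ' : ℕ} (hμ' : μ + 1 ≤ μ') {P x : Word} (hx : x ∈ P.splitOn μ)
    (hlow : ∀ a ∈ P, μ ≤ a) {c : ℕ} (hP : wt μ P ≤ c) (hc : 1 ≤ c) :
    wt μ' x + 1 ≤ c := by
  rcases eq_or_ne x [] with rfl | hxne
  · have h0 : wt μ' ([] : Word) = 0 := by simp [wt]
    omega
  · have hPne : P ≠ [] := by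
      rintro rfl
      simp only [List.splitOn_nil, List.mem_singleton] at hx
      exact hxne hx
    have hlen : x.length ≤ P.length := length_block_le hx
    have hmaxx : maxSym x ≤ maxSym P := by
      apply foldr_max_le
      intro a ha
      exact mem_le_foldr_max ((mem_block hx ha).1)
    have hμmax : μ ≤ maxSym P := by
      obtain ⟨a, ha⟩ := List.exists_mem_of_ne_nil P hPne
      exact le_trans (hlow a ha) (mem_le_foldr_max ha)
    have e1 : wt μ P = P.length + (maxSym P + 1 - μ) := if_neg hPne
    have e2 : wt μ' x = x.length + (maxSym x + 1 - μ') := if_neg hxne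
    omega

def base2 (A B : Word) : ℕ := ((A ++ B).min?).getD 0

def meas2 (A B : Word) : ℕ := max (wt (base2 A B) A) (wt (base2 A B) B)

def base3 (A B C : Word) : ℕ := ((A ++ B ++ C).min?).getD 0

def meas3 (A B C : Word) : ℕ :=
  max (max (wt (base3 A B C) A) (wt (base3 A B C) B)) (wt (base3 A B C) C)

-- blocks (with respect to the global min μ of the involved words) have min ≥ μ+1
lemma blocks_min_ge {μ : ℕ} {Ws : List Word} (hWs : ∀ P ∈ Ws, ∀ a ∈ P, μ ≤ a)
    {xs : List Word} (hxs : ∀ x ∈ xs, ∃ P ∈ Ws, x ∈ P.splitOn μ)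
    {μ' : ℕ} (hμ' : (xs.flatten).min? = some μ') : μ + 1 ≤ μ' := by
  have hmem : μ' ∈ xs.flatten := (minNat_eq_some_iff.mp hμ').1
  obtain ⟨x, hx, hax⟩ := List.mem_flatten.mp hmem
  obtain ⟨P, hP, hxP⟩ := hxs x hx
  obtain ⟨haP, hane⟩ := mem_block hxP hax
  have := hWs P hP μ' haP
  omega

def IsBlk (μ : ℕ) (Ws : List Word) (x : Word) : Prop := ∃ P ∈ Ws, x ∈ P.splitOn μ

lemma blk_min_ge2 {μ : ℕ} {Ws : List Word} (hlow : ∀ P ∈ Ws, ∀ a ∈ P, μ ≤ a)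
    {x y : Word} (hx : IsBlk μ Ws x) (hy : IsBlk μ Ws y)
    {μ' : ℕ} (hm' : (x ++ y).min? = some μ') : μ + 1 ≤ μ' := by
  have hmem : μ' ∈ x ++ y := (minNat_eq_some_iff.mp hm').1
  have key : ∀ {z : Word}, IsBlk μ Ws z → μ' ∈ z → μ + 1 ≤ μ' := by
    rintro z ⟨P, hP, hzP⟩ hz
    obtain ⟨haP, hane⟩ := mem_block hzP hz
    have := hlow P hP μ' haP
    omega
  rcases List.mem_append.mp hmem with h | h
  · exact key hx h
  · exact key hy h

lemma blk_min_ge3 {μ : ℕ} {Ws : List Word} (hlow : ∀ P ∈ Ws, ∀ a ∈ P, μ ≤ a)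
    {x y z : Word} (hx : IsBlk μ Ws x) (hy : IsBlk μ Ws y) (hz : IsBlk μ Ws z)
    {μ' : ℕ} (hm' : (x ++ y ++ z).min? = some μ') : μ + 1 ≤ μ' := by
  have hmem : μ' ∈ x ++ y ++ z := (minNat_eq_some_iff.mp hm').1
  have key : ∀ {w : Word}, IsBlk μ Ws w → μ' ∈ w → μ + 1 ≤ μ' := by
    rintro w ⟨P, hP, hwP⟩ hw
    obtain ⟨haP, hane⟩ := mem_block hwP hw
    have := hlow P hP μ' haP
    omega
  rcases List.mem_append.mp hmem with h | h
  · rcases List.mem_append.mp h with h' | h'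
    · exact key hx h'
    · exact key hy h'
  · exact key hz h

lemma hlow2 {μ : ℕ} {A B : Word} (hm : (A ++ B).min? = some μ) :
    ∀ P ∈ [A, B], ∀ a ∈ P, μ ≤ a := by
  have h := (minNat_eq_some_iff.mp hm).2
  intro P hP a ha
  rcases List.mem_cons.mp hP with rfl | hP'
  · exact h a (List.mem_append.mpr (Or.inl ha))
  · simp only [List.mem_singleton] at hP'
    subst hP'
    exact h a (List.mem_append.mpr (Or.inr ha))

lemma hlow3 {μ : ℕ} {A B C : Word} (hm : (A ++ B ++ C).min? = some μ) :
    ∀ P ∈ [A, B, C], ∀ a ∈ P, μ ≤ a := by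
  have h := (minNat_eq_some_iff.mp hm).2
  intro P hP a ha
  fin_cases hP
  · exact h a (by simp [ha])
  · exact h a (by simp [ha])
  · exact h a (by simp [ha])

lemma meas2_pos {μ : ℕ} {A B : Word} (hm : (A ++ B).min? = some μ) : 1 ≤ meas2 A B := by
  have hmem : μ ∈ A ++ B := (minNat_eq_some_iff.mp hm).1
  rcases List.mem_append.mp hmem with h | h
  · exact le_trans (wt_pos (fun hh => by simp [hh] at h)) (le_max_left _ _)
  · exact le_trans (wt_pos (fun hh => by simp [hh] at h)) (le_max_right _ _)

lemma meas3_pos {μ : ℕ} {A B C : Word} (hm : (A ++ B ++ C).min? = some μ) : 1 ≤ meas3 A B C := by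
  have hmem : μ ∈ A ++ B ++ C := (minNat_eq_some_iff.mp hm).1
  unfold meas3
  rcases List.mem_append.mp hmem with h | h
  · rcases List.mem_append.mp h with h' | h'
    · exact le_trans (wt_pos (fun hh => by simp [hh] at h')) (le_trans (le_max_left _ _) (le_max_left _ _))
    · exact le_trans (wt_pos (fun hh => by simp [hh] at h')) (le_trans (le_max_right _ _) (le_max_left _ _))
  · exact le_trans (wt_pos (fun hh => by simp [hh] at h)) (le_max_right _ _)

lemma wt_coord2 {μ : ℕ} {A B : Word} (hm : (A ++ B).min? = some μ)
    {x : Word} (hx : IsBlk μ [A, B] x) {μ' : ℕ} (hμ' : μ + 1 ≤ μ') :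
    wt μ' x + 1 ≤ meas2 A B := by
  have hb : base2 A B = μ := by rw [base2, hm]; rfl
  have hlow := hlow2 hm
  have h1 := meas2_pos hm
  obtain ⟨P, hP, hxP⟩ := hx
  fin_cases hP
  · exact wt_block hμ' hxP (hlow A (by simp)) (hb ▸ le_max_left _ _) h1
  · exact wt_block hμ' hxP (hlow B (by simp)) (hb ▸ le_max_right _ _) h1

lemma wt_coord3 {μ : ℕ} {A B C : Word} (hm : (A ++ B ++ C).min? = some μ)
    {x : Word} (hx : IsBlk μ [A, B, C] x) {μ' : ℕ} (hμ' : μ + 1 ≤ μ') :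
    wt μ' x + 1 ≤ meas3 A B C := by
  have hb : base3 A B C = μ := by rw [base3, hm]; rfl
  have hlow := hlow3 hm
  have h1 := meas3_pos hm
  obtain ⟨P, hP, hxP⟩ := hx
  fin_cases hP
  · exact wt_block hμ' hxP (hlow A (by simp)) (hb ▸ le_trans (le_max_left _ _) (le_max_left _ _)) h1
  · exact wt_block hμ' hxP (hlow B (by simp)) (hb ▸ le_trans (le_max_right _ _) (le_max_left _ _)) h1
  · exact wt_block hμ' hxP (hlow C (by simp)) (hb ▸ le_max_right _ _) h1

lemma wt_nil (μ : ℕ) : wt μ ([] : Word) = 0 := by simp [wt]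

lemma meas2_of_ctx2 {μ : ℕ} {A B : Word} (hm : (A ++ B).min? = some μ)
    {x y : Word} (hx : IsBlk μ [A, B] x) (hy : IsBlk μ [A, B] y) :
    meas2 x y < meas2 A B := by
  have h1 := meas2_pos hm
  rcases eq_or_ne (x ++ y) [] with hnil | hne
  · obtain ⟨rfl, rfl⟩ := List.append_eq_nil_iff.mp hnil
    have : meas2 ([] : Word) ([] : Word) = 0 := by simp [meas2, wt_nil]
    omega
  · obtain ⟨μ', hμ'⟩ := minNat_exists hne
    have hb : base2 x y = μ' := by rw [base2, hμ']; rfl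
    have hge : μ + 1 ≤ μ' := blk_min_ge2 (hlow2 hm) hx hy hμ'
    have e1 := wt_coord2 hm hx hge
    have e2 := wt_coord2 hm hy hge
    have : meas2 x y = max (wt μ' x) (wt μ' y) := by rw [meas2, hb]
    omega

lemma meas3_of_ctx2 {μ : ℕ} {A B : Word} (hm : (A ++ B).min? = some μ)
    {x y z : Word} (hx : IsBlk μ [A, B] x) (hy : IsBlk μ [A, B] y) (hz : IsBlk μ [A, B] z) :
    meas3 x y z < meas2 A B := by
  have h1 := meas2_pos hm
  rcases eq_or_ne (x ++ y ++ z) [] with hnil | hne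
  · obtain ⟨h', rfl⟩ := List.append_eq_nil_iff.mp hnil
    obtain ⟨rfl, rfl⟩ := List.append_eq_nil_iff.mp h'
    have : meas3 ([] : Word) ([] : Word) ([] : Word) = 0 := by simp [meas3, wt_nil]
    omega
  · obtain ⟨μ', hμ'⟩ := minNat_exists hne
    have hb : base3 x y z = μ' := by rw [base3, hμ']; rfl
    have hge : μ + 1 ≤ μ' := blk_min_ge3 (hlow2 hm) hx hy hz hμ'
    have e1 := wt_coord2 hm hx hge
    have e2 := wt_coord2 hm hy hge
    have e3 := wt_coord2 hm hz hge
    have : meas3 x y z = max (max (wt μ' x) (wt μ' y)) (wt μ' z) := by rw [meas3, hb]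
    omega

lemma meas2_of_ctx3 {μ : ℕ} {A B C : Word} (hm : (A ++ B ++ C).min? = some μ)
    {x y : Word} (hx : IsBlk μ [A, B, C] x) (hy : IsBlk μ [A, B, C] y) :
    meas2 x y < meas3 A B C := by
  have h1 := meas3_pos hm
  rcases eq_or_ne (x ++ y) [] with hnil | hne
  · obtain ⟨rfl, rfl⟩ := List.append_eq_nil_iff.mp hnil
    have : meas2 ([] : Word) ([] : Word) = 0 := by simp [meas2, wt_nil]
    omega
  · obtain ⟨μ', hμ'⟩ := minNat_exists hne
    have hb : base2 x y = μ' := by rw [base2, hμ']; rfl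
    have hge : μ + 1 ≤ μ' := blk_min_ge2 (hlow3 hm) hx hy hμ'
    have e1 := wt_coord3 hm hx hge
    have e2 := wt_coord3 hm hy hge
    have : meas2 x y = max (wt μ' x) (wt μ' y) := by rw [meas2, hb]
    omega

lemma meas3_of_ctx3 {μ : ℕ} {A B C : Word} (hm : (A ++ B ++ C).min? = some μ)
    {x y z : Word} (hx : IsBlk μ [A, B, C] x) (hy : IsBlk μ [A, B, C] y)
    (hz : IsBlk μ [A, B, C] z) :
    meas3 x y z < meas3 A B C := by
  have h1 := meas3_pos hm
  rcases eq_or_ne (x ++ y ++ z) [] with hnil | hne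
  · obtain ⟨h', rfl⟩ := List.append_eq_nil_iff.mp hnil
    obtain ⟨rfl, rfl⟩ := List.append_eq_nil_iff.mp h'
    have : meas3 ([] : Word) ([] : Word) ([] : Word) = 0 := by simp [meas3, wt_nil]
    omega
  · obtain ⟨μ', hμ'⟩ := minNat_exists hne
    have hb : base3 x y z = μ' := by rw [base3, hμ']; rfl
    have hge : μ + 1 ≤ μ' := blk_min_ge3 (hlow3 hm) hx hy hz hμ'
    have e1 := wt_coord3 hm hx hge
    have e2 := wt_coord3 hm hy hge
    have e3 := wt_coord3 hm hz hge
    have : meas3 x y z = max (max (wt μ' x) (wt μ' y)) (wt μ' z) := by rw [meas3, hb]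
    omega

lemma mkmin {μ : ℕ} (X Y : List ℕ) (hmem : μ ∈ X ++ Y)
    (hX : ∀ a ∈ X, μ ≤ a) (hY : ∀ a ∈ Y, μ ≤ a) : (X ++ Y).min? = some μ :=
  minNat_eq_some_iff.mpr ⟨hmem, fun b hb => (List.mem_append.mp hb).elim (hX b) (hY b)⟩

lemma tot_trans : ∀ n : ℕ,
    (∀ A B : Word, meas2 A B ≤ n → (Wle A B ∨ Wle B A)) ∧
    (∀ A B C : Word, meas3 A B C ≤ n → Wle A B → Wle B C → Wle A C) := by
  intro n
  induction n using Nat.strong_induction_on with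
  | _ n ih =>
    constructor
    · -- totality
      intro A B hmeas
      rcases eq_or_ne A [] with rfl | hA
      · exact Or.inl (nil_Wle B)
      rcases eq_or_ne B [] with rfl | hB
      · exact Or.inr (nil_Wle A)
      obtain ⟨μ, hm⟩ := minNat_exists (l := A ++ B)
        (fun h => hA (List.append_eq_nil_iff.mp h).1)
      have hn1 : 1 ≤ n := le_trans (meas2_pos hm) hmeas
      have htot' : ∀ x y : Word, IsBlk μ [A,B] x → IsBlk μ [A,B] y → (Wle x y ∨ Wle y x) := by
        intro x y hx hy
        exact (ih (n-1) (by omega)).1 x y (by have := meas2_of_ctx2 hm hx hy; omega)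
      have htr' : ∀ x y z : Word, IsBlk μ [A,B] x → IsBlk μ [A,B] y → IsBlk μ [A,B] z →
          Wle x y → Wle y z → Wle x z := by
        intro x y z hx hy hz
        exact (ih (n-1) (by omega)).2 x y z (by have := meas3_of_ctx2 hm hx hy hz; omega)
      by_cases hW : Wle A B
      · exact Or.inl hW
      · refine Or.inr ?_
        have hm' : (B ++ A).min? = some μ := (min?_append_comm A B) ▸ hm
        rw [Wle_iff hm']
        intro MB MA hMB hMA
        rw [Wle_iff hm] at hW
        push_neg at hW
        obtain ⟨MA', MB', hMA', hMB', hnl⟩ := hW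
        have mA : ∀ {a}, a ∈ MA → IsBlk μ [A,B] a := fun h => ⟨A, by simp, hMA.1.mem h⟩
        have mA' : ∀ {a}, a ∈ MA' → IsBlk μ [A,B] a := fun h => ⟨A, by simp, hMA'.1.mem h⟩
        have mB : ∀ {a}, a ∈ MB → IsBlk μ [A,B] a := fun h => ⟨B, by simp, hMB.1.mem h⟩
        have mB' : ∀ {a}, a ∈ MB' → IsBlk μ [A,B] a := fun h => ⟨B, by simp, hMB'.1.mem h⟩
        have hBA' : LexLe Wle MB' MA' := by
          rcases lexLe_total (r := Wle) (X := MA') (Y := MB')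
            (fun a b ha hb => htot' a b (mA' ha) (mB' hb)) with h | h
          · exact absurd h hnl
          · exact h
        have l1 : LexLe Wle MB MB' := hMB'.2 MB hMB.1
        have l2 : LexLe Wle MA' MA := hMA.2 MA' hMA'.1
        have res1 : ∀ {a : Word}, (a ∈ MB ∨ a ∈ MB' ∨ a ∈ MA') → IsBlk μ [A,B] a :=
          fun h => h.elim (fun h => mB h) (fun h => h.elim (fun h => mB' h) (fun h => mA' h))
        have t1 : LexLe Wle MB MA' :=
          lexLe_trans (fun a b c ha hb hc => htr' a b c (res1 ha) (res1 hb) (res1 hc)) l1 hBA'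
        have res2 : ∀ {a : Word}, (a ∈ MB ∨ a ∈ MA' ∨ a ∈ MA) → IsBlk μ [A,B] a :=
          fun h => h.elim (fun h => mB h) (fun h => h.elim (fun h => mA' h) (fun h => mA h))
        exact lexLe_trans (fun a b c ha hb hc => htr' a b c (res2 ha) (res2 hb) (res2 hc)) t1 l2
    · -- transitivity
      intro A B C hmeas hAB hBC
      rcases eq_or_ne A [] with rfl | hA
      · exact nil_Wle C
      obtain ⟨μ, hm⟩ := minNat_exists (l := A ++ B ++ C)
        (fun h => hA (List.append_eq_nil_iff.mp (List.append_eq_nil_iff.mp h).1).1)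
      have hn1 : 1 ≤ n := le_trans (meas3_pos hm) hmeas
      have hlow := hlow3 hm
      have hlowA : ∀ a ∈ A, μ ≤ a := hlow A (by simp)
      have hlowB : ∀ a ∈ B, μ ≤ a := hlow B (by simp)
      have hlowC : ∀ a ∈ C, μ ≤ a := hlow C (by simp)
      have hmemμ : μ ∈ A ++ B ++ C := (minNat_eq_some_iff.mp hm).1
      have hmem' : μ ∈ A ∨ μ ∈ B ∨ μ ∈ C := by
        simpa [List.mem_append, or_assoc] using hmemμ
      have htr' : ∀ x y z : Word, IsBlk μ [A,B,C] x → IsBlk μ [A,B,C] y → IsBlk μ [A,B,C] z →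
          Wle x y → Wle y z → Wle x z := fun x y z hx hy hz =>
        (ih (n-1) (by omega)).2 x y z (by have := meas3_of_ctx3 hm hx hy hz; omega)
      have htot' : ∀ x y : Word, IsBlk μ [A,B,C] x → IsBlk μ [A,B,C] y → (Wle x y ∨ Wle y x) :=
        fun x y hx hy => (ih (n-1) (by omega)).1 x y (by have := meas2_of_ctx3 hm hx hy; omega)
      by_cases hgen : (μ ∈ A ∨ μ ∈ B) ∧ (μ ∈ B ∨ μ ∈ C) ∧ (μ ∈ A ∨ μ ∈ C)
      · -- generic case
        obtain ⟨hp1, hp2, hp3⟩ := hgen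
        have hmAB : (A++B).min? = some μ :=
          mkmin A B (by rcases hp1 with h|h <;> simp [h]) hlowA hlowB
        have hmBC : (B++C).min? = some μ :=
          mkmin B C (by rcases hp2 with h|h <;> simp [h]) hlowB hlowC
        have hmAC : (A++C).min? = some μ :=
          mkmin A C (by rcases hp3 with h|h <;> simp [h]) hlowA hlowC
        rw [Wle_iff hmAC]
        intro MA MC hMA hMC
        rw [Wle_iff hmAB] at hAB
        rw [Wle_iff hmBC] at hBC
        have blkB' : ∀ {x}, x ∈ B.splitOn μ → IsBlk μ [A,B,C] x := fun h => ⟨B, by simp, h⟩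
        obtain ⟨MB, hMB⟩ := exists_isLexMax (r := Wle) (B.splitOn μ)
          (fun a ha b hb => htot' a b (blkB' ha) (blkB' hb))
          (fun a ha b hb c hc => htr' a b c (blkB' ha) (blkB' hb) (blkB' hc))
        have l1 := hAB MA MB hMA hMB
        have l2 := hBC MB MC hMB hMC
        have res : ∀ {a : Word}, (a ∈ MA ∨ a ∈ MB ∨ a ∈ MC) → IsBlk μ [A,B,C] a := by
          rintro a (h | h | h)
          · exact ⟨A, by simp, hMA.1.mem h⟩
          · exact blkB' (hMB.1.mem h)
          · exact ⟨C, by simp, hMC.1.mem h⟩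
        exact lexLe_trans (fun a b c ha hb hc => htr' a b c (res ha) (res hb) (res hc)) l1 l2
      · have honly : (μ ∈ A ∧ μ ∉ B ∧ μ ∉ C) ∨ (μ ∈ B ∧ μ ∉ A ∧ μ ∉ C) ∨
            (μ ∈ C ∧ μ ∉ A ∧ μ ∉ B) := by tauto
        rcases honly with ⟨hμA, hμB, hμC⟩ | ⟨hμB, hμA, hμC⟩ | ⟨hμC, hμA, hμB⟩
        · -- case (b): μ only in A
          have hmAB : (A++B).min? = some μ := mkmin A B (by simp [hμA]) hlowA hlowB
          have hmAC : (A++C).min? = some μ := mkmin A C (by simp [hμA]) hlowA hlowC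
          have hsB : B.splitOn μ = [B] := splitOn_not_mem hμB
          rw [Wle_iff hmAC]
          intro MA MC hMA hMC
          have hMCeq : MC = [C] := by
            rw [splitOn_not_mem hμC] at hMC; exact lexmax_singleton hMC
          subst hMCeq
          rw [Wle_iff hmAB] at hAB
          have l1 : LexLe Wle MA [B] := hAB MA [B] hMA (hsB ▸ isLexMax_singleton_self (Wle_refl B))
          rcases eq_or_ne MA [] with rfl | hMAne
          · exact lexLe_nil_left _
          have hpos : 0 < MA.length := List.length_pos_iff.mpr hMAne
          set a0 := MA.getD 0 [] with ha0
          have blk_a0 : IsBlk μ [A,B,C] a0 := ⟨A, by simp, hMA.1.mem (getD_mem hpos)⟩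
          have blk_B : IsBlk μ [A,B,C] B := ⟨B, by simp, by rw [hsB]; simp⟩
          have blk_C : IsBlk μ [A,B,C] C := ⟨C, by simp, by rw [splitOn_not_mem hμC]; simp⟩
          have ha0B : Wle a0 B := by
            rcases l1 with ⟨hlen, hpt⟩ | ⟨s, hs1, hs2, hpre, hle, hnot⟩
            · exact (hpt 0 hpos).1
            · have hs0 : s = 0 := by simpa [Nat.lt_one_iff] using hs2
              subst hs0; exact hle
          have ha0C : Wle a0 C := htr' a0 B C blk_a0 blk_B blk_C ha0B hBC
          by_cases hc : Wle C a0
          · rcases l1 with ⟨hlen, hpt⟩ | ⟨s, hs1, hs2, hpre, hle, hnot⟩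
            · have hlen' : MA.length ≤ 1 := by simpa using hlen
              refine Or.inl ⟨by simpa using hlen', fun i hi => ?_⟩
              have hi0 : i = 0 := by omega
              subst hi0
              exact ⟨ha0C, hc⟩
            · have hs0 : s = 0 := by simpa [Nat.lt_one_iff] using hs2
              subst hs0
              exact absurd (htr' B C a0 blk_B blk_C blk_a0 hBC hc) hnot
          · exact Or.inr ⟨0, hpos, by simp, fun i hi => absurd hi (by omega), ha0C, hc⟩
        · -- case (a): μ only in B
          have hmAB : (A++B).min? = some μ := mkmin A B (by simp [hμB]) hlowA hlowB
          have hmBC : (B++C).min? = some μ := mkmin B C (by simp [hμB]) hlowB hlowC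
          have hsA : A.splitOn μ = [A] := splitOn_not_mem hμA
          have hsC : C.splitOn μ = [C] := splitOn_not_mem hμC
          rw [Wle_iff hmAB] at hAB
          rw [Wle_iff hmBC] at hBC
          have blkB' : ∀ {x}, x ∈ B.splitOn μ → IsBlk μ [A,B,C] x := fun h => ⟨B, by simp, h⟩
          obtain ⟨MB, hMB⟩ := exists_isLexMax (r := Wle) (B.splitOn μ)
            (fun a ha b hb => htot' a b (blkB' ha) (blkB' hb))
            (fun a ha b hb c hc => htr' a b c (blkB' ha) (blkB' hb) (blkB' hc))
          have l1 : LexLe Wle [A] MB := hAB [A] MB (hsA ▸ isLexMax_singleton_self (Wle_refl A)) hMB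
          have hMBne : MB ≠ [] := lexmax_ne_nil (splitOn_ne_nil μ B) hMB
          have hpos : 0 < MB.length := List.length_pos_iff.mpr hMBne
          set b0 := MB.getD 0 [] with hb0
          have hAb0 : Wle A b0 := by
            rcases l1 with ⟨hlen, hpt⟩ | ⟨s, hs1, hs2, hpre, hle, hnot⟩
            · exact (hpt 0 (by simp)).1
            · have hs0 : s = 0 := by simpa [Nat.lt_one_iff] using hs1
              subst hs0; exact hle
          have l2 : LexLe Wle MB [C] := hBC MB [C] hMB (hsC ▸ isLexMax_singleton_self (Wle_refl C))
          have hb0C : Wle b0 C := by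
            rcases l2 with ⟨hlen, hpt⟩ | ⟨s, hs1, hs2, hpre, hle, hnot⟩
            · exact (hpt 0 hpos).1
            · have hs0 : s = 0 := by simpa [Nat.lt_one_iff] using hs2
              subst hs0; exact hle
          exact htr' A b0 C ⟨A, by simp, by rw [hsA]; simp⟩
            (blkB' (hMB.1.mem (getD_mem hpos))) ⟨C, by simp, by rw [hsC]; simp⟩ hAb0 hb0C
        · -- case (c): μ only in C
          have hmBC : (B++C).min? = some μ := mkmin B C (by simp [hμC]) hlowB hlowC
          have hmAC : (A++C).min? = some μ := mkmin A C (by simp [hμC]) hlowA hlowC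
          rw [Wle_iff hmAC]
          intro MA MC hMA hMC
          have hMAeq : MA = [A] := by
            rw [splitOn_not_mem hμA] at hMA; exact lexmax_singleton hMA
          subst hMAeq
          rw [Wle_iff hmBC] at hBC
          have l2 : LexLe Wle [B] MC :=
            hBC [B] MC (splitOn_not_mem hμB ▸ isLexMax_singleton_self (Wle_refl B)) hMC
          have hMCne : MC ≠ [] := lexmax_ne_nil (splitOn_ne_nil μ C) hMC
          have hpos : 0 < MC.length := List.length_pos_iff.mpr hMCne
          set c0 := MC.getD 0 [] with hc0
          have blk_c0 : IsBlk μ [A,B,C] c0 := ⟨C, by simp, hMC.1.mem (getD_mem hpos)⟩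
          have blk_A : IsBlk μ [A,B,C] A := ⟨A, by simp, by rw [splitOn_not_mem hμA]; simp⟩
          have blk_B : IsBlk μ [A,B,C] B := ⟨B, by simp, by rw [splitOn_not_mem hμB]; simp⟩
          have hBc0 : Wle B c0 := by
            rcases l2 with ⟨hlen, hpt⟩ | ⟨s, hs1, hs2, hpre, hle, hnot⟩
            · exact (hpt 0 (by simp)).1
            · have hs0 : s = 0 := by simpa [Nat.lt_one_iff] using hs1
              subst hs0; exact hle
          have hAc0 : Wle A c0 := htr' A B c0 blk_A blk_B blk_c0 hAB hBc0
          by_cases hc : Wle c0 A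
          · refine Or.inl ⟨by simp; omega, fun i hi => ?_⟩
            have hi0 : i = 0 := by simpa [Nat.lt_one_iff] using hi
            subst hi0
            exact ⟨hAc0, hc⟩
          · exact Or.inr ⟨0, by simp, hpos, fun i hi => absurd hi (by omega), hAc0, hc⟩

lemma Wle_total (A B : Word) : Wle A B ∨ Wle B A := (tot_trans (meas2 A B)).1 A B le_rfl

lemma Wle_trans {A B C : Word} (h1 : Wle A B) (h2 : Wle B C) : Wle A C :=
  (tot_trans (meas3 A B C)).2 A B C le_rfl h1 h2

lemma subseq_sublist_aux (L : List Word) :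
    ∀ (s : List ℕ) (k : ℕ), List.Pairwise (· < ·) s →
      (∀ i ∈ s, k + 1 ≤ i ∧ i ≤ L.length) →
      (s.map (fun i => L.getD (i-1) [])) <+ L.drop k := by
  intro s
  induction s with
  | nil => intro k _ _; simp
  | cons i s ih =>
    intro k hpw hbd
    obtain ⟨hi1, hi2⟩ := hbd i (List.mem_cons_self)
    have hlt : i - 1 < L.length := by omega
    have h1 : (s.map (fun i => L.getD (i-1) [])) <+ L.drop i := by
      refine ih i hpw.of_cons (fun j hj => ⟨?_, (hbd j (List.mem_cons_of_mem _ hj)).2⟩)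
      have := List.rel_of_pairwise_cons hpw hj
      omega
    have h2 : (L.getD (i-1) []) :: (s.map (fun i => L.getD (i-1) [])) <+ L[i-1] :: L.drop i := by
      rw [List.getD_eq_getElem _ _ hlt]
      exact h1.cons₂ _
    have h3 : L.drop (i-1) = L[i-1] :: L.drop i := by
      rw [List.drop_eq_getElem_cons hlt, show i - 1 + 1 = i by omega]
    have h4 : L.drop (i-1) <+ L.drop k := by
      have he : L.drop (i - 1) = (L.drop k).drop (i-1-k) := by
        rw [List.drop_drop]; congr 1; omega
      rw [he]; exact List.drop_sublist _ _
    simp only [List.map_cons]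
    exact ((h3 ▸ h2).trans h4)

lemma subseq_sublist {L : List Word} {s : List ℕ} (h : IndexColl L.length s) :
    SubseqOf L s <+ L := by
  have hp : List.Pairwise (· < ·) s := List.isChain_iff_pairwise.mp h.1
  have h0 := subseq_sublist_aux L s 0 hp (fun i hi => ⟨(h.2 i hi).1, (h.2 i hi).2⟩)
  simpa [SubseqOf] using h0

lemma maxcoll_ne_nil {L : List Word} {s : List ℕ} (hL : L ≠ []) (h : IsMaxColl L s) :
    s ≠ [] := by
  rintro rfl
  obtain ⟨b, hb⟩ := List.exists_mem_of_ne_nil L hL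
  have hlex := h.2 [b] (List.singleton_sublist.mpr hb)
  have : SubseqOf L [] = [] := rfl
  rw [this] at hlex
  exact not_lexLe_nil (X := [b]) (by simp) hlex

-- any maximal subsequence list is pointwise non-increasing
lemma maxcoll_mono {L : List Word} {s : List ℕ} (h : IsMaxColl L s) :
    ∀ i j, i ≤ j → j < (SubseqOf L s).length →
      Wle ((SubseqOf L s).getD j []) ((SubseqOf L s).getD i []) := by
  set M := SubseqOf L s with hMdef
  have hMsub : M <+ L := subseq_sublist h.1
  have hstep : ∀ i, i + 1 < M.length → Wle (M.getD (i+1) []) (M.getD i []) := by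
    intro i hi
    have hsub : M.eraseIdx i <+ L := (List.eraseIdx_sublist M i).trans hMsub
    have hlex := h.2 _ hsub
    have hlenE : (M.eraseIdx i).length = M.length - 1 := by
      rw [List.length_eraseIdx, if_pos (by omega)]
    have hgetlt : ∀ j, j < i → (M.eraseIdx i).getD j [] = M.getD j [] := by
      intro j hj
      rw [List.getD_eq_getElem _ _ (by omega), List.getD_eq_getElem _ _ (by omega),
        List.getElem_eraseIdx, dif_pos hj]
    have hgetge : ∀ j, i ≤ j → j < M.length - 1 → (M.eraseIdx i).getD j [] = M.getD (j+1) [] := by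
      intro j h1 h2
      rw [List.getD_eq_getElem _ _ (by omega), List.getD_eq_getElem _ _ (by omega),
        List.getElem_eraseIdx, dif_neg (by omega)]
    rcases hlex with ⟨hlen, hpt⟩ | ⟨sx, hs1, hs2, hpre, hle, hnot⟩
    · have := (hpt i (by omega)).1
      rwa [hgetge i le_rfl (by omega)] at this
    · rw [hlenE] at hs1
      rcases lt_trichotomy sx i with hlt | heq | hgt
      · rw [hgetlt sx hlt] at hnot
        exact absurd (Wle_refl _) hnot
      · subst heq
        rwa [hgetge sx le_rfl (by omega)] at hle
      · have := (hpre i hgt).1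
        rwa [hgetge i le_rfl (by omega)] at this
  intro i j hij
  induction j, hij using Nat.le_induction with
  | base => intro _; exact Wle_refl _
  | succ j hij ih =>
    intro hj
    exact Wle_trans (hstep j (by omega)) (ih (by omega))

end CM

open CM in
theorem concatenation_maximal_index_collection
    (LA LB : List Word) (hA : LA ≠ []) (hB : LB ≠ [])
    (gs hs : List ℕ) (hgs : IsMaxColl LA gs) (hhs : IsMaxColl LB hs) :
    IsMaxColl (LA ++ LB)
      (gs.take (sSup {i | 1 ≤ i ∧ i ≤ gs.length ∧
          Wle (LB.getD (hs.getD 0 0 - 1) []) (LA.getD (gs.getD (i-1) 0 - 1) [])})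
        ++ hs.map (· + LA.length)) := by
  classical
  set b1 := LB.getD (hs.getD 0 0 - 1) [] with hb1def
  set S : Set ℕ := {i | 1 ≤ i ∧ i ≤ gs.length ∧
    Wle b1 (LA.getD (gs.getD (i-1) 0 - 1) [])} with hSdef
  set k := sSup S with hkdef
  set M := SubseqOf LA gs with hMdef
  set Bq := SubseqOf LB hs with hBqdef
  have hMlen : M.length = gs.length := by rw [hMdef]; simp [SubseqOf]
  have hBlen : Bq.length = hs.length := by rw [hBqdef]; simp [SubseqOf]
  have hhsne : hs ≠ [] := maxcoll_ne_nil hB hhs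
  have hgsne : gs ≠ [] := maxcoll_ne_nil hA hgs
  have hBpos : 0 < Bq.length := by
    rw [hBlen]; exact List.length_pos_iff.mpr hhsne
  have hMget : ∀ i, i < gs.length → M.getD i [] = LA.getD (gs.getD i 0 - 1) [] := by
    intro i hi
    rw [List.getD_eq_getElem _ _ (by omega), List.getD_eq_getElem _ _ hi]
    simp [hMdef, SubseqOf]
  have hb1B : Bq.getD 0 [] = b1 := by
    have h0 : 0 < hs.length := List.length_pos_iff.mpr hhsne
    rw [List.getD_eq_getElem _ _ hBpos, hb1def, List.getD_eq_getElem _ _ h0]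
    simp [hBqdef, SubseqOf]
  have hMmono : ∀ i j, i ≤ j → j < M.length → Wle (M.getD j []) (M.getD i []) := by
    have := maxcoll_mono hgs
    rwa [← hMdef] at this
  have hBmono : ∀ i j, i ≤ j → j < Bq.length → Wle (Bq.getD j []) (Bq.getD i []) := by
    have := maxcoll_mono hhs
    rwa [← hBqdef] at this
  have hSbdd : BddAbove S := ⟨gs.length, fun i hi => hi.2.1⟩
  have hkle : k ≤ gs.length := by
    by_cases hS : S.Nonempty
    · exact (Nat.sSup_mem hS hSbdd).2.1
    · rw [hkdef, Set.not_nonempty_iff_eq_empty.mp hS, csSup_empty]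
      exact Nat.zero_le _
  have hb1M : ∀ i, i < k → Wle b1 (M.getD i []) := by
    intro i hik
    have h1k : 0 < k := by omega
    have hkS : k ∈ S := by
      by_cases hS : S.Nonempty
      · exact Nat.sSup_mem hS hSbdd
      · exfalso
        rw [hkdef, Set.not_nonempty_iff_eq_empty.mp hS, csSup_empty] at h1k
        exact absurd h1k (by simp)
    have hb1k : Wle b1 (M.getD (k-1) []) := by
      rw [hMget (k-1) (by omega)]
      exact hkS.2.2
    exact Wle_trans hb1k (hMmono i (k-1) (by omega) (by omega))
  have hMkb1 : k < gs.length → Wle (M.getD k []) b1 ∧ ¬ Wle b1 (M.getD k []) := by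
    intro hkr
    have hnot : ¬ Wle b1 (M.getD k []) := by
      intro hc
      have hmem : k+1 ∈ S := by
        refine ⟨by omega, by omega, ?_⟩
        have hidx : k + 1 - 1 = k := rfl
        rw [hidx, ← hMget k hkr]
        exact hc
      have := le_csSup hSbdd hmem
      omega
    rcases Wle_total (M.getD k []) b1 with h | h
    · exact ⟨h, hnot⟩
    · exact absurd h hnot
  have hTk : (M.take k).length = k := by
    rw [List.length_take]
    omega
  have hTeq : SubseqOf (LA ++ LB) (gs.take k ++ hs.map (· + LA.length)) = M.take k ++ Bq := by
    rw [hMdef, hBqdef]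
    show (gs.take k ++ hs.map (· + LA.length)).map (fun i => (LA++LB).getD (i-1) []) = _
    rw [List.map_append]
    congr 1
    · rw [show SubseqOf LA gs = gs.map (fun i => LA.getD (i-1) []) from rfl, ← List.map_take]
      apply List.map_congr_left
      intro i hi
      have hb := hgs.1.2 i ((List.take_sublist k gs).mem hi)
      exact List.getD_append _ _ _ _ (by omega)
    · rw [show SubseqOf LB hs = hs.map (fun i => LB.getD (i-1) []) from rfl, List.map_map]
      apply List.map_congr_left
      intro h hh
      have hb := hhs.1.2 h hh
      show (LA ++ LB).getD (h + LA.length - 1) [] = LB.getD (h - 1) []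
      rw [List.getD_append_right _ _ _ _ (by omega)]
      congr 1
      omega
  constructor
  · -- IndexColl
    constructor
    · rw [List.Chain', List.isChain_append]
      refine ⟨hgs.1.1.take k, ?_, ?_⟩
      · rw [List.isChain_map]
        exact hhs.1.1.imp (fun a b h => by omega)
      · intro x hx y hy
        have hxg : x ∈ gs := (List.take_sublist k gs).mem (List.mem_of_mem_getLast? hx)
        have hxn := (hgs.1.2 x hxg).2
        obtain ⟨h', hh', rfl⟩ := List.mem_map.mp (List.mem_of_mem_head? hy)
        have h1 := (hhs.1.2 h' hh').1
        omega
    · intro i hi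
      rw [List.length_append]
      rcases List.mem_append.mp hi with h | h
      · have := hgs.1.2 i ((List.take_sublist k gs).mem h)
        exact ⟨this.1, by omega⟩
      · obtain ⟨h', hh', rfl⟩ := List.mem_map.mp h
        have := hhs.1.2 h' hh'
        exact ⟨by omega, by omega⟩
  · -- maximality
    intro N hN
    rw [hTeq]
    obtain ⟨N1, N2, rfl, hN1, hN2⟩ := List.sublist_append_iff.mp hN
    have hL1 : LexLe Wle N1 M := by
      have := hgs.2 N1 hN1
      rwa [← hMdef] at this
    have hL2 : LexLe Wle N2 Bq := by
      have := hhs.2 N2 hN2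
      rwa [← hBqdef] at this
    have hTget1 : ∀ i, i < k → (M.take k ++ Bq).getD i [] = M.getD i [] := by
      intro i hik
      rw [List.getD_append _ _ _ i (by omega)]
      rw [List.getD_eq_getElem _ _ (by omega), List.getD_eq_getElem _ _ (by omega)]
      exact List.getElem_take
    have hTget2 : ∀ i, k ≤ i → (M.take k ++ Bq).getD i [] = Bq.getD (i - k) [] := by
      intro i hik
      rw [List.getD_append_right _ _ _ _ (by omega), hTk]
    have hNget1 : ∀ i, i < N1.length → (N1 ++ N2).getD i [] = N1.getD i [] :=
      fun i hi => List.getD_append _ _ _ i hi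
    have hNget2 : ∀ i, N1.length ≤ i → (N1 ++ N2).getD i [] = N2.getD (i - N1.length) [] :=
      fun i hi => List.getD_append_right _ _ _ _ hi
    have hBq1 : ∀ j, j < Bq.length → Wle (Bq.getD j []) b1 := by
      intro j hj
      have := hBmono 0 j (Nat.zero_le _) hj
      rwa [hb1B] at this
    have hlenN : (N1 ++ N2).length = N1.length + N2.length := List.length_append
    have hlenT : (M.take k ++ Bq).length = k + Bq.length := by
      rw [List.length_append, hTk]
    rcases hL1 with ⟨hlen1, hpt1⟩ | ⟨s, hs1, hs2, hpre1, hle1, hnot1⟩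
    · -- prefix case for N1 vs M
      by_cases hk1 : k < N1.length
      · -- strict at position k
        have hkr : k < gs.length := by omega
        obtain ⟨hMkb, hMknot⟩ := hMkb1 hkr
        apply lexLe_of_strict k (by omega) (by omega)
        · intro i hi
          rcases eq_or_ne i k with rfl | hne
          · rw [hNget1 k hk1, hTget2 k le_rfl]
            simp only [Nat.sub_self]
            rw [hb1B]
            exact Wle_trans (hpt1 k hk1).1 hMkb
          · rw [hNget1 i (by omega), hTget1 i (by omega)]
            exact (hpt1 i (by omega)).1
        · rw [hNget1 k hk1, hTget2 k le_rfl]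
          simp only [Nat.sub_self]
          rw [hb1B]
          intro hc
          exact hMknot (Wle_trans hc (hpt1 k hk1).1)
      · push_neg at hk1
        rcases hL2 with ⟨hlen2, hpt2⟩ | ⟨s2, hs21, hs22, hpre2, hle2, hnot2⟩
        · -- fully pointwise
          apply lexLe_of_pointwise (by omega)
          intro i hi
          by_cases hiN1 : i < N1.length
          · rw [hNget1 i hiN1, hTget1 i (by omega)]
            exact (hpt1 i hiN1).1
          · push_neg at hiN1
            have hj : i - N1.length < N2.length := by omega
            rw [hNget2 i hiN1]
            by_cases hik : i < k
            · rw [hTget1 i hik]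
              exact Wle_trans (hpt2 _ hj).1
                (Wle_trans (hBq1 _ (by omega)) (hb1M i hik))
            · push_neg at hik
              rw [hTget2 i hik]
              exact Wle_trans (hpt2 _ hj).1
                (hBmono (i-k) (i - N1.length) (by omega) (by omega))
        · -- N2 strict at s2 : overall strict at N1.length + s2
          apply lexLe_of_strict (N1.length + s2) (by omega) (by omega)
          · intro i hi
            by_cases hiN1 : i < N1.length
            · rw [hNget1 i hiN1, hTget1 i (by omega)]
              exact (hpt1 i hiN1).1
            · push_neg at hiN1
              have hjs : i - N1.length ≤ s2 := by omega
              have hjB : i - N1.length < Bq.length := by omega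
              have hN2j : Wle (N2.getD (i - N1.length) []) (Bq.getD (i - N1.length) []) := by
                rcases eq_or_ne (i - N1.length) s2 with h | h
                · rw [h]; exact hle2
                · exact (hpre2 _ (by omega)).1
              rw [hNget2 i hiN1]
              by_cases hik : i < k
              · rw [hTget1 i hik]
                exact Wle_trans hN2j (Wle_trans (hBq1 _ hjB) (hb1M i hik))
              · push_neg at hik
                rw [hTget2 i hik]
                exact Wle_trans hN2j (hBmono (i-k) (i - N1.length) (by omega) hjB)
          · have hc1 : N1.length ≤ N1.length + s2 := by omega
            rw [hNget2 _ hc1, show N1.length + s2 - N1.length = s2 by omega]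
            by_cases hck : N1.length + s2 < k
            · rw [hTget1 _ hck]
              intro hcontra
              exact hnot2 (Wle_trans (hBq1 s2 hs22)
                (Wle_trans (hb1M _ hck) hcontra))
            · push_neg at hck
              rw [hTget2 _ hck]
              intro hcontra
              exact hnot2 (Wle_trans (hBmono (N1.length + s2 - k) s2 (by omega) hs22) hcontra)
    · -- strict case for N1 vs M at position s
      by_cases hsk : s < k
      · apply lexLe_of_strict s (by omega) (by omega)
        · intro i hi
          rcases eq_or_ne i s with rfl | hne
          · rw [hNget1 i (by omega), hTget1 i (by omega)]
            exact hle1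
          · rw [hNget1 i (by omega), hTget1 i (by omega)]
            exact (hpre1 i (by omega)).1
        · rw [hNget1 s hs1, hTget1 s hsk]
          exact hnot1
      · push_neg at hsk
        have hkr : k < gs.length := by omega
        obtain ⟨hMkb, hMknot⟩ := hMkb1 hkr
        have hNk : Wle (N1.getD k []) (M.getD k []) := by
          rcases eq_or_ne k s with rfl | hne
          · exact hle1
          · exact (hpre1 k (by omega)).1
        apply lexLe_of_strict k (by omega) (by omega)
        · intro i hi
          rcases eq_or_ne i k with rfl | hne
          · rw [hNget1 k (by omega), hTget2 k le_rfl]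
            simp only [Nat.sub_self]
            rw [hb1B]
            exact Wle_trans hNk hMkb
          · rw [hNget1 i (by omega), hTget1 i (by omega)]
            exact (hpre1 i (by omega)).1
        · rw [hNget1 k (by omega), hTget2 k le_rfl]
          simp only [Nat.sub_self]
          rw [hb1B]
          intro hc
          exact hMknot (Wle_trans hc hNk)
end

section
/- For every natural number k and all words A, B ∈ W_ω, if A ∼ B (that is, A ≾ B and B ≾ A) then Ak ∼ Bk, where Ak denotes the word A with the symbol k appended at the end. Consequently, for each k the operation a_k : A ↦ Ak is well defined on the quotient W_ω/∼. -/
open scoped Classical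

/-! ### Auxiliary development for `append_symbol_congruence` -/

open Ordinal in
/-- Sum of `ω`-powers of a list of ordinals, in order. -/
noncomputable def wsum (u : List Ordinal.{0}) : Ordinal.{0} :=
  (u.map (fun a => omega0 ^ a)).foldr (· + ·) 0

@[simp] lemma wsum_nil : wsum [] = 0 := rfl

@[simp] lemma wsum_cons (a : Ordinal.{0}) (u : List Ordinal.{0}) :
    wsum (a :: u) = Ordinal.omega0 ^ a + wsum u := rfl

lemma wsum_append (u w : List Ordinal.{0}) : wsum (u ++ w) = wsum u + wsum w := by
  induction u with
  | nil => simp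
  | cons a u ih => simp [ih, add_assoc]

lemma one_le_wsum {u : List Ordinal.{0}} (hu : u ≠ []) : 1 ≤ wsum u := by
  cases u with
  | nil => exact absurd rfl hu
  | cons a u =>
    refine le_trans ?_ (le_self_add)
    simpa using (Order.one_le_iff_pos).2 (Ordinal.opow_pos _ Ordinal.omega0_pos)

lemma wsum_pos {u : List Ordinal.{0}} (hu : u ≠ []) : 0 < wsum u :=
  lt_of_lt_of_le zero_lt_one (one_le_wsum hu)

lemma two_le_wsum {a b : Ordinal.{0}} {u : List Ordinal.{0}} : 2 ≤ wsum (a :: b :: u) := by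
  have h1 : (1 : Ordinal.{0}) ≤ Ordinal.omega0 ^ a :=
    (Order.one_le_iff_pos).2 (Ordinal.opow_pos _ Ordinal.omega0_pos)
  have h2 : (1 : Ordinal.{0}) ≤ wsum (b :: u) := one_le_wsum (by simp)
  calc (2 : Ordinal.{0}) = 1 + 1 := by norm_num
  _ ≤ Ordinal.omega0 ^ a + wsum (b :: u) := add_le_add h1 h2
  _ = wsum (a :: b :: u) := (wsum_cons _ _).symm

lemma opow_add_wsum_absorb : ∀ (u : List Ordinal.{0}) (a : Ordinal.{0}),
    (∃ b ∈ u, a < b) → Ordinal.omega0 ^ a + wsum u = wsum u := by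
  intro u
  induction u with
  | nil => rintro a ⟨b, hb, -⟩; exact absurd hb (List.not_mem_nil)
  | cons c u ih =>
    rintro a ⟨b, hb, hab⟩
    rcases lt_or_ge a c with hac | hca
    · rw [wsum_cons, ← add_assoc, Ordinal.add_omega0_opow]
      exact (Ordinal.opow_lt_opow_iff_right Ordinal.one_lt_omega0).2 hac
    · have hbu : b ∈ u := by
        rcases List.mem_cons.1 hb with rfl | h
        · exact absurd hab (not_lt.2 hca)
        · exact h
      have h1 : Ordinal.omega0 ^ a + wsum u = wsum u := ih a ⟨b, hbu, hab⟩
      have h2 : Ordinal.omega0 ^ c + wsum u = wsum u := ih c ⟨b, hbu, lt_of_le_of_lt hca hab⟩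
      rw [wsum_cons, ← add_assoc]
      calc Ordinal.omega0 ^ a + Ordinal.omega0 ^ c + wsum u
        = Ordinal.omega0 ^ a + (Ordinal.omega0 ^ c + wsum u) := by rw [add_assoc]
      _ = Ordinal.omega0 ^ a + wsum u := by rw [h2]
      _ = wsum u := h1
      _ = Ordinal.omega0 ^ c + wsum u := h2.symm

lemma wsum_lt_opow {u : List Ordinal.{0}} {a : Ordinal.{0}} (h : ∀ c ∈ u, c ≤ a) :
    wsum u < Ordinal.omega0 ^ (a + 1) := by
  induction u with
  | nil => rw [wsum_nil]; exact Ordinal.opow_pos _ Ordinal.omega0_pos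
  | cons c u ih =>
    rw [wsum_cons]
    refine Ordinal.principal_add_omega0_opow _ ?_ (ih fun x hx => h x (List.mem_cons_of_mem _ hx))
    refine (Ordinal.opow_lt_opow_iff_right Ordinal.one_lt_omega0).2 ?_
    have := h c (List.mem_cons_self)
    rw [Ordinal.add_one_eq_succ]
    exact Order.lt_succ_of_le this

/-- Strict-or-equal lexicographic comparison on lists of ordinals. -/
def lexval : List Ordinal.{0} → List Ordinal.{0} → Prop
  | [], _ => True
  | _ :: _, [] => False
  | a :: u, b :: w => a < b ∨ (a = b ∧ lexval u w)

@[simp] lemma lexval_nil (w : List Ordinal.{0}) : lexval [] w := trivial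

@[simp] lemma lexval_cons_nil (a : Ordinal.{0}) (u : List Ordinal.{0}) : ¬ lexval (a :: u) [] :=
  fun h => h

@[simp] lemma lexval_cons_cons (a b : Ordinal.{0}) (u w : List Ordinal.{0}) :
    lexval (a :: u) (b :: w) ↔ a < b ∨ (a = b ∧ lexval u w) := Iff.rfl

lemma lexval_antisymm : ∀ u w : List Ordinal.{0}, lexval u w → lexval w u → u = w := by
  intro u
  induction u with
  | nil =>
    intro w _ h2
    cases w with
    | nil => rfl
    | cons b w => exact absurd h2 (lexval_cons_nil b w)
  | cons a u ih =>
    intro w h1 h2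
    cases w with
    | nil => exact absurd h1 (lexval_cons_nil a u)
    | cons b w =>
      rcases h1 with h1 | ⟨rfl, h1⟩
      · rcases h2 with h2 | ⟨rfl, h2⟩
        · exact absurd h2 (lt_asymm h1)
        · exact absurd h1 (lt_irrefl _)
      · rcases h2 with h2 | ⟨-, h2⟩
        · exact absurd h2 (lt_irrefl _)
        · rw [ih w h1 h2]

/-- Non-increasing lists of ordinals. -/
def NonInc (u : List Ordinal.{0}) : Prop := u.Chain' (fun x y => y ≤ x)

lemma NonInc.tail' {a : Ordinal.{0}} {u : List Ordinal.{0}} (h : NonInc (a :: u)) : NonInc u :=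
  (List.isChain_cons.1 h).2

lemma nonInc_all {a : Ordinal.{0}} {u : List Ordinal.{0}} (h : NonInc (a :: u)) :
    ∀ c ∈ u, c ≤ a := by
  induction u generalizing a with
  | nil => intro c hc; exact absurd hc (List.not_mem_nil)
  | cons d u ih =>
    intro c hc
    have hd : d ≤ a := (List.isChain_cons_cons.1 h).1
    rcases List.mem_cons.1 hc with rfl | hc
    · exact hd
    · exact le_trans (ih (List.isChain_cons_cons.1 h).2 c hc) hd

lemma lexval_iff_wsum : ∀ u w : List Ordinal.{0}, NonInc u → NonInc w →
    (lexval u w ↔ wsum u ≤ wsum w) := by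
  intro u
  induction u with
  | nil => intro w _ _; simp
  | cons a u ih =>
    intro w hu hw
    cases w with
    | nil =>
      simp only [lexval_cons_nil, wsum_nil, false_iff]
      exact fun h => absurd (le_antisymm h zero_le)
        (ne_of_gt (wsum_pos (by simp)))
    | cons b w =>
      rcases lt_trichotomy a b with hab | rfl | hba
      · refine iff_of_true (Or.inl hab) (le_of_lt ?_)
        calc wsum (a :: u) < Ordinal.omega0 ^ (a + 1) := wsum_lt_opow (by
              intro c hc
              rcases List.mem_cons.1 hc with rfl | hc
              · exact le_refl _
              · exact nonInc_all hu c hc)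
        _ ≤ Ordinal.omega0 ^ b := Ordinal.opow_le_opow_right Ordinal.omega0_pos (by
              rw [Ordinal.add_one_eq_succ]; exact Order.succ_le_of_lt hab)
        _ ≤ wsum (b :: w) := by rw [wsum_cons]; exact le_self_add
      · have : lexval (a :: u) (a :: w) ↔ lexval u w := by simp
        rw [this, wsum_cons, wsum_cons, add_le_add_iff_left]
        exact ih w hu.tail' hw.tail'
      · refine iff_of_false ?_ ?_
        · rintro (h | ⟨rfl, -⟩)
          · exact absurd h (lt_asymm hba)
          · exact absurd hba (lt_irrefl _)
        · refine not_le.2 ?_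
          calc wsum (b :: w) < Ordinal.omega0 ^ (b + 1) := wsum_lt_opow (by
                intro c hc
                rcases List.mem_cons.1 hc with rfl | hc
                · exact le_refl _
                · exact nonInc_all hw c hc)
          _ ≤ Ordinal.omega0 ^ a := Ordinal.opow_le_opow_right Ordinal.omega0_pos (by
                rw [Ordinal.add_one_eq_succ]; exact Order.succ_le_of_lt hba)
          _ ≤ wsum (a :: u) := by rw [wsum_cons]; exact le_self_add

/-- The subsequence of suffix-maxima. -/
noncomputable def maxseq : List Ordinal.{0} → List Ordinal.{0}
  | [] => []
  | a :: u => if ∀ b ∈ u, b ≤ a then a :: maxseq u else maxseq u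

lemma maxseq_sublist : ∀ u : List Ordinal.{0}, (maxseq u).Sublist u := by
  intro u
  induction u with
  | nil => simp [maxseq]
  | cons a u ih =>
    rw [maxseq]
    split_ifs
    · exact ih.cons₂ a
    · exact ih.cons a

lemma maxseq_max : ∀ u : List Ordinal.{0}, u ≠ [] →
    ∃ h t, maxseq u = h :: t ∧ ∀ c ∈ u, c ≤ h := by
  intro u
  induction u with
  | nil => intro h; exact absurd rfl h
  | cons a u ih =>
    intro _
    rw [maxseq]
    split_ifs with hc
    · refine ⟨a, maxseq u, rfl, ?_⟩
      intro c hcu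
      rcases List.mem_cons.1 hcu with rfl | hcu
      · exact le_refl _
      · exact hc c hcu
    · push_neg at hc
      obtain ⟨b, hb, hab⟩ := hc
      obtain ⟨h, t, heq, hmax⟩ := ih (List.ne_nil_of_mem hb)
      refine ⟨h, t, heq, ?_⟩
      intro c hcu
      rcases List.mem_cons.1 hcu with rfl | hcu
      · exact le_trans (le_of_lt hab) (hmax b hb)
      · exact hmax c hcu

lemma maxseq_nonInc : ∀ u : List Ordinal.{0}, NonInc (maxseq u) := by
  intro u
  induction u with
  | nil => simp [maxseq, NonInc, List.Chain']
  | cons a u ih =>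
    rw [maxseq]
    split_ifs with hc
    · refine List.isChain_cons.2 ⟨?_, ih⟩
      intro h hh
      have hmem : h ∈ maxseq u := List.mem_of_mem_head? hh
      exact hc h ((maxseq_sublist u).subset hmem)
    · exact ih

lemma maxseq_wsum : ∀ u : List Ordinal.{0}, wsum (maxseq u) = wsum u := by
  intro u
  induction u with
  | nil => rfl
  | cons a u ih =>
    rw [maxseq]
    split_ifs with hc
    · rw [wsum_cons, wsum_cons, ih]
    · push_neg at hc
      obtain ⟨b, hb, hab⟩ := hc
      rw [ih, wsum_cons, opow_add_wsum_absorb u a ⟨b, hb, hab⟩]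

lemma maxseq_dominates : ∀ (u N : List Ordinal.{0}), N.Sublist u → lexval N (maxseq u) := by
  intro u
  induction u with
  | nil =>
    intro N hN
    rw [List.sublist_nil.1 hN]; simp
  | cons a u ih =>
    intro N hN
    rw [maxseq]
    rcases List.sublist_cons_iff.1 hN with hN' | ⟨N', rfl, hN'⟩
    · split_ifs with hc
      · cases N with
        | nil => simp
        | cons c N'' =>
          have hcu : c ∈ u := hN'.subset (List.mem_cons_self)
          rcases lt_or_eq_of_le (hc c hcu) with h | h
          · exact Or.inl h
          · refine Or.inr ⟨h, ih N'' ?_⟩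
            exact List.Sublist.trans (List.sublist_cons_self c N'') hN'
      · exact ih N hN'
    · split_ifs with hc
      · exact Or.inr ⟨rfl, ih N' hN'⟩
      · push_neg at hc
        obtain ⟨b, hb, hab⟩ := hc
        obtain ⟨h, t, heq, hmax⟩ := maxseq_max u (List.ne_nil_of_mem hb)
        rw [heq]
        exact Or.inl (lt_of_lt_of_le hab (hmax b hb))
/-! ### `LexLe` and `IsLexMax` via ordinal values -/

lemma lexLe_nil (r : Word → Word → Prop) (ys : List Word) : LexLe r [] ys :=
  Or.inl ⟨Nat.zero_le _, fun i hi => absurd hi (Nat.not_lt_zero i)⟩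

lemma lexLe_cons_nil (r : Word → Word → Prop) (x : Word) (xs : List Word) :
    ¬ LexLe r (x :: xs) [] := by
  rintro (⟨hlen, -⟩ | ⟨s, -, hs, -⟩)
  · simp at hlen
  · simp at hs

lemma lexLe_cons_cons {r : Word → Word → Prop} {x y : Word} {xs ys : List Word} :
    LexLe r (x :: xs) (y :: ys) ↔
      ((r x y ∧ ¬ r y x) ∨ (r x y ∧ r y x ∧ LexLe r xs ys)) := by
  constructor
  · rintro (⟨hlen, hall⟩ | ⟨s, hs1, hs2, hpre, hxy, hnyx⟩)
    · have h0 := hall 0 (by simp)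
      simp only [List.getD_cons_zero] at h0
      refine Or.inr ⟨h0.1, h0.2, Or.inl ⟨by simpa using hlen, ?_⟩⟩
      intro i hi
      have := hall (i + 1) (by simpa using Nat.succ_lt_succ hi)
      simpa using this
    · cases s with
      | zero =>
        simp only [List.getD_cons_zero] at hxy hnyx
        exact Or.inl ⟨hxy, hnyx⟩
      | succ s' =>
        have h0 := hpre 0 (Nat.succ_pos _)
        simp only [List.getD_cons_zero] at h0
        refine Or.inr ⟨h0.1, h0.2, Or.inr ⟨s', ?_, ?_, ?_, ?_, ?_⟩⟩
        · simpa using hs1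
        · simpa using hs2
        · intro i hi
          have := hpre (i + 1) (Nat.succ_lt_succ hi)
          simpa using this
        · simpa using hxy
        · simpa using hnyx
  · rintro (⟨hxy, hnyx⟩ | ⟨hxy, hyx, (⟨hlen, hall⟩ | ⟨s, hs1, hs2, hpre, h1, h2⟩)⟩)
    · refine Or.inr ⟨0, Nat.succ_pos _, Nat.succ_pos _,
        fun i hi => absurd hi (Nat.not_lt_zero i), by simpa, by simpa⟩
    · refine Or.inl ⟨Nat.succ_le_succ hlen, ?_⟩
      intro i hi
      cases i with
      | zero => simpa using ⟨hxy, hyx⟩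
      | succ j =>
        have := hall j (by simpa using hi)
        simpa using this
    · refine Or.inr ⟨s + 1, by simpa using Nat.succ_lt_succ hs1,
        by simpa using Nat.succ_lt_succ hs2, ?_, by simpa using h1, by simpa using h2⟩
      intro i hi
      cases i with
      | zero => simpa using ⟨hxy, hyx⟩
      | succ j =>
        have := hpre j (by omega)
        simpa using this

lemma lexLe_iff_lexval {r : Word → Word → Prop} {v : Word → Ordinal.{0}} {L : List Word}
    (hrep : ∀ x ∈ L, ∀ y ∈ L, (r x y ↔ v x ≤ v y)) :
    ∀ xs ys : List Word, (∀ x ∈ xs, x ∈ L) → (∀ y ∈ ys, y ∈ L) →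
      (LexLe r xs ys ↔ lexval (xs.map v) (ys.map v)) := by
  intro xs
  induction xs with
  | nil =>
    intro ys _ _
    simpa using lexLe_nil r ys
  | cons x xs ih =>
    intro ys hxs hys
    cases ys with
    | nil => simpa using lexLe_cons_nil r x xs
    | cons y ys =>
      have hx := hxs x (List.mem_cons_self)
      have hy := hys y (List.mem_cons_self)
      have h1 := hrep x hx y hy
      have h2 := hrep y hy x hx
      rw [lexLe_cons_cons, List.map_cons, List.map_cons, lexval_cons_cons,
        ih ys (fun z hz => hxs z (List.mem_cons_of_mem _ hz))
          (fun z hz => hys z (List.mem_cons_of_mem _ hz)), h1, h2]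
      constructor
      · rintro (⟨ha, hb⟩ | ⟨ha, hb, hc⟩)
        · exact Or.inl (lt_of_le_not_ge ha hb)
        · exact Or.inr ⟨le_antisymm ha hb, hc⟩
      · rintro (h | ⟨h, hc⟩)
        · exact Or.inl ⟨le_of_lt h, not_le.2 h⟩
        · exact Or.inr ⟨le_of_eq h, le_of_eq h.symm, hc⟩

/-- Pick the suffix-maxima subsequence of a list of words w.r.t. values `v`. -/
noncomputable def pick (v : Word → Ordinal.{0}) : List Word → List Word
  | [] => []
  | x :: xs => if ∀ y ∈ xs, v y ≤ v x then x :: pick v xs else pick v xs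

lemma pick_sublist (v : Word → Ordinal.{0}) : ∀ xs : List Word, (pick v xs).Sublist xs := by
  intro xs
  induction xs with
  | nil => simp [pick]
  | cons x xs ih =>
    rw [pick]
    split_ifs
    · exact ih.cons₂ x
    · exact ih.cons x

lemma pick_map (v : Word → Ordinal.{0}) : ∀ xs : List Word,
    (pick v xs).map v = maxseq (xs.map v) := by
  intro xs
  induction xs with
  | nil => simp [pick, maxseq]
  | cons x xs ih =>
    rw [pick, List.map_cons, maxseq]
    have hcond : (∀ y ∈ xs, v y ≤ v x) ↔ (∀ b ∈ xs.map v, b ≤ v x) := by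
      simp
    split_ifs with h1 h2 h2
    · rw [List.map_cons, ih]
    · exact absurd (hcond.1 h1) h2
    · exact absurd (hcond.2 h2) h1
    · exact ih

lemma pick_isLexMax {r : Word → Word → Prop} {v : Word → Ordinal.{0}} {L : List Word}
    (hrep : ∀ x ∈ L, ∀ y ∈ L, (r x y ↔ v x ≤ v y))
    (xs : List Word) (hxs : ∀ x ∈ xs, x ∈ L) :
    IsLexMax r xs (pick v xs) := by
  refine ⟨pick_sublist v xs, ?_⟩
  intro N hN
  have hNL : ∀ x ∈ N, x ∈ L := fun x hx => hxs x (hN.subset hx)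
  have hpL : ∀ x ∈ pick v xs, x ∈ L := fun x hx => hxs x ((pick_sublist v xs).subset hx)
  rw [lexLe_iff_lexval hrep N (pick v xs) hNL hpL, pick_map]
  exact maxseq_dominates (xs.map v) (N.map v) (hN.map v)

lemma isLexMax_vals {r : Word → Word → Prop} {v : Word → Ordinal.{0}} {L : List Word}
    (hrep : ∀ x ∈ L, ∀ y ∈ L, (r x y ↔ v x ≤ v y))
    {xs M : List Word} (hxs : ∀ x ∈ xs, x ∈ L) (hM : IsLexMax r xs M) :
    M.map v = maxseq (xs.map v) := by
  have hML : ∀ x ∈ M, x ∈ L := fun x hx => hxs x (hM.1.subset hx)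
  have hpL : ∀ x ∈ pick v xs, x ∈ L := fun x hx => hxs x ((pick_sublist v xs).subset hx)
  have h1 : lexval ((pick v xs).map v) (M.map v) :=
    (lexLe_iff_lexval hrep _ _ hpL hML).1 (hM.2 (pick v xs) (pick_sublist v xs))
  have h2 : lexval (M.map v) (maxseq (xs.map v)) :=
    maxseq_dominates (xs.map v) (M.map v) (hM.1.map v)
  rw [pick_map] at h1
  exact lexval_antisymm _ _ h2 h1
/-! ### Structure of `List.splitOn` -/

/-- Recursive model of `List.splitOn`. -/
def msplit (m : ℕ) : List ℕ → List (List ℕ)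
  | [] => [[]]
  | a :: A => if a = m then [] :: msplit m A else (msplit m A).modifyHead (a :: ·)

lemma splitOn_eq_msplit (m : ℕ) : ∀ A : List ℕ, A.splitOn m = msplit m A := by
  intro A
  induction A with
  | nil => rfl
  | cons a A ih =>
    rw [msplit, ← ih]
    simp only [List.splitOn, List.splitOnP_cons]
    by_cases h : a = m <;> simp [h]

lemma msplit_ne_nil (m : ℕ) : ∀ A : List ℕ, msplit m A ≠ [] := by
  intro A
  induction A with
  | nil => simp [msplit]
  | cons a A ih =>
    rw [msplit]
    split_ifs
    · simp
    · cases h : msplit m A with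
      | nil => exact absurd h ih
      | cons b l => simp [h]

lemma msplit_not_mem {m : ℕ} : ∀ {A : List ℕ}, m ∉ A → msplit m A = [A] := by
  intro A
  induction A with
  | nil => intro _; rfl
  | cons a A ih =>
    intro hm
    rw [msplit, if_neg (fun h => hm (by rw [h]; exact List.mem_cons_self)),
      ih (fun h => hm (List.mem_cons_of_mem _ h))]
    rfl

lemma msplit_sumlen (m : ℕ) : ∀ A : List ℕ,
    ((msplit m A).map List.length).sum + (msplit m A).length = A.length + 1 := by
  intro A
  induction A with
  | nil => simp [msplit]
  | cons a A ih =>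
    rw [msplit]
    split_ifs
    · simp only [List.map_cons, List.sum_cons, List.length_cons, List.length_nil]
      omega
    · cases h : msplit m A with
      | nil => exact absurd h (msplit_ne_nil m A)
      | cons b l =>
        rw [h] at ih
        simp only [List.modifyHead_cons, List.map_cons, List.sum_cons,
          List.length_cons] at ih ⊢
        omega

lemma msplit_mem {m : ℕ} : ∀ {A : List ℕ} {b : List ℕ}, b ∈ msplit m A →
    ∀ x ∈ b, x ∈ A ∧ x ≠ m := by
  intro A
  induction A with
  | nil =>
    intro b hb x hx
    rw [msplit] at hb
    simp only [List.mem_singleton] at hb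
    subst hb
    exact absurd hx (List.not_mem_nil)
  | cons a A ih =>
    intro b hb x hx
    rw [msplit] at hb
    split_ifs at hb with ha
    · rcases List.mem_cons.1 hb with rfl | hb
      · exact absurd hx (List.not_mem_nil)
      · obtain ⟨h1, h2⟩ := ih hb x hx
        exact ⟨List.mem_cons_of_mem _ h1, h2⟩
    · cases h : msplit m A with
      | nil => exact absurd h (msplit_ne_nil m A)
      | cons c l =>
        rw [h, List.modifyHead_cons] at hb
        rcases List.mem_cons.1 hb with rfl | hb
        · rcases List.mem_cons.1 hx with rfl | hx
          · exact ⟨List.mem_cons_self, ha⟩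
          · obtain ⟨h1, h2⟩ := ih (b := c) (by rw [h]; exact List.mem_cons_self) x hx
            exact ⟨List.mem_cons_of_mem _ h1, h2⟩
        · obtain ⟨h1, h2⟩ := ih (b := b) (by rw [h]; exact List.mem_cons_of_mem c hb) x hx
          exact ⟨List.mem_cons_of_mem _ h1, h2⟩

lemma msplit_len_two {m : ℕ} : ∀ {A : List ℕ}, m ∈ A → 2 ≤ (msplit m A).length := by
  intro A
  induction A with
  | nil => intro h; exact absurd h (List.not_mem_nil)
  | cons a A ih =>
    intro hm
    rw [msplit]
    split_ifs with ha
    · have := msplit_ne_nil m A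
      cases h : msplit m A with
      | nil => exact absurd h this
      | cons b l => simp only [List.length_cons]; omega
    · have hmA : m ∈ A := by
        rcases List.mem_cons.1 hm with rfl | h
        · exact absurd rfl ha
        · exact h
      cases h : msplit m A with
      | nil => exact absurd h (msplit_ne_nil m A)
      | cons b l =>
        have := ih hmA
        rw [h] at this
        simpa using this

lemma msplit_append_same (m : ℕ) : ∀ A : List ℕ,
    msplit m (A ++ [m]) = msplit m A ++ [[]] := by
  intro A
  induction A with
  | nil => simp [msplit]
  | cons a A ih =>
    rw [List.cons_append, msplit, msplit]
    split_ifs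
    · rw [ih]; rfl
    · rw [ih]
      cases h : msplit m A with
      | nil => exact absurd h (msplit_ne_nil m A)
      | cons b l => simp

lemma msplit_append_ne {m k : ℕ} (hk : k ≠ m) : ∀ A : List ℕ,
    ∃ l b, msplit m A = l ++ [b] ∧ msplit m (A ++ [k]) = l ++ [b ++ [k]] := by
  intro A
  induction A with
  | nil =>
    refine ⟨[], [], rfl, ?_⟩
    show msplit m [k] = [[k]]
    rw [msplit, if_neg hk]
    rfl
  | cons a A ih =>
    obtain ⟨l, b, h1, h2⟩ := ih
    rw [List.cons_append, msplit, msplit]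
    split_ifs
    · exact ⟨[] :: l, b, by rw [h1]; rfl, by rw [h2]; rfl⟩
    · cases l with
      | nil =>
        simp only [List.nil_append] at h1 h2
        exact ⟨[], a :: b, by rw [h1]; rfl, by rw [h2]; rfl⟩
      | cons c l' =>
        simp only [List.cons_append] at h1 h2
        exact ⟨(a :: c) :: l', b, by rw [h1]; rfl, by rw [h2]; rfl⟩

lemma mem_len_le_sum {x : List ℕ} {l : List (List ℕ)} (hx : x ∈ l) :
    x.length ≤ (l.map List.length).sum :=
  List.single_le_sum (fun _ _ => Nat.zero_le _) _ (List.mem_map_of_mem hx)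

lemma two_mem_sum : ∀ {l : List (List ℕ)} {x y : List ℕ}, x ∈ l → y ∈ l → x ≠ y →
    x.length + y.length ≤ (l.map List.length).sum ∧ 2 ≤ l.length := by
  intro l
  induction l with
  | nil => intro x y hx _ _; exact absurd hx (List.not_mem_nil)
  | cons z l ih =>
    intro x y hx hy hxy
    by_cases hxz : x = z
    · subst hxz
      have hyl : y ∈ l := by
        rcases List.mem_cons.1 hy with rfl | h
        · exact absurd rfl hxy
        · exact h
      have h1 : y.length ≤ (l.map List.length).sum := mem_len_le_sum hyl
      have h2 : 1 ≤ l.length := List.length_pos_iff.2 (List.ne_nil_of_mem hyl)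
      simp only [List.map_cons, List.sum_cons, List.length_cons]
      omega
    · by_cases hyz : y = z
      · subst hyz
        have hxl : x ∈ l := by
          rcases List.mem_cons.1 hx with h | h
          · exact absurd h hxz
          · exact h
        have h1 : x.length ≤ (l.map List.length).sum := mem_len_le_sum hxl
        have h2 : 1 ≤ l.length := List.length_pos_iff.2 (List.ne_nil_of_mem hxl)
        simp only [List.map_cons, List.sum_cons, List.length_cons]
        omega
      · have hxl : x ∈ l := by
          rcases List.mem_cons.1 hx with h | h
          · exact absurd h hxz
          · exact h
        have hyl : y ∈ l := by
          rcases List.mem_cons.1 hy with h | h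
          · exact absurd h hyz
          · exact h
        obtain ⟨h1, h2⟩ := ih hxl hyl hxy
        simp only [List.map_cons, List.sum_cons, List.length_cons]
        omega
/-! ### The ordinal valuation of words -/

/-- Fuelled ordinal valuation: `valAux fuel A n` is the ordinal of the word `A`
viewed at level `n`. -/
noncomputable def valAux : ℕ → Word → ℕ → Ordinal.{0}
  | 0, _, _ => 0
  | (f + 1), A, n =>
    match A.min? with
    | none => 0
    | some m =>
      (fun β => Ordinal.omega0 ^ β)^[m - n]
        (wsum ((A.splitOn m).map (fun b => valAux f b (m + 1))))

/-- The ordinal valuation of a word at level `n`. -/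
noncomputable def val (A : Word) (n : ℕ) : Ordinal.{0} := valAux A.length A n

lemma valAux_nil : ∀ (f n : ℕ), valAux f [] n = 0 := by
  intro f n
  cases f with
  | zero => rfl
  | succ f => rfl

lemma block_len {A : Word} {m : ℕ} (hm : m ∈ A) {b : Word} (hb : b ∈ A.splitOn m) :
    b.length < A.length := by
  rw [splitOn_eq_msplit] at hb
  have h1 := msplit_sumlen m A
  have h2 := msplit_len_two hm
  have h3 := mem_len_le_sum hb
  omega

lemma block_sym {A : Word} {m : ℕ} {b : Word} (hb : b ∈ A.splitOn m) :
    ∀ x ∈ b, x ∈ A ∧ x ≠ m := by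
  rw [splitOn_eq_msplit] at hb
  exact msplit_mem hb

lemma valAux_eq : ∀ (N f f' : ℕ) (A : Word) (n : ℕ), A.length ≤ N →
    A.length ≤ f → A.length ≤ f' → valAux f A n = valAux f' A n := by
  intro N
  induction N with
  | zero =>
    intro f f' A n hN _ _
    have hA : A = [] := List.length_eq_zero_iff.1 (Nat.le_zero.1 hN)
    subst hA
    rw [valAux_nil, valAux_nil]
  | succ N ih =>
    intro f f' A n hN hf hf'
    by_cases hA : A = []
    · subst hA; rw [valAux_nil, valAux_nil]
    · have hlen : 1 ≤ A.length := List.length_pos_iff.2 hA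
      obtain ⟨g, rfl⟩ : ∃ g, f = g + 1 := ⟨f - 1, by omega⟩
      obtain ⟨g', rfl⟩ : ∃ g', f' = g' + 1 := ⟨f' - 1, by omega⟩
      cases hmin : A.min? with
      | none => exact absurd (List.min?_eq_none_iff.1 hmin) hA
      | some m =>
        have hmem : m ∈ A := (List.min?_eq_some_iff'.1 hmin).1
        simp only [valAux, hmin]
        congr 1
        congr 1
        refine List.map_congr_left ?_
        intro b hb
        have hblen := block_len hmem hb
        exact ih g g' b (m + 1) (by omega) (by omega) (by omega)

@[simp] lemma val_nil (n : ℕ) : val [] n = 0 := rfl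

lemma val_def {A : Word} {m : ℕ} (hA : A ≠ []) (hmin : A.min? = some m) (n : ℕ) :
    val A n = (fun β => Ordinal.omega0 ^ β)^[m - n]
      (wsum ((A.splitOn m).map (fun b => val b (m + 1)))) := by
  have hlen : 1 ≤ A.length := List.length_pos_iff.2 hA
  obtain ⟨L, hL⟩ : ∃ L, A.length = L + 1 := ⟨A.length - 1, by omega⟩
  have hmem : m ∈ A := (List.min?_eq_some_iff'.1 hmin).1
  rw [val, hL]
  simp only [valAux, hmin]
  congr 1
  congr 1
  refine List.map_congr_left ?_
  intro b hb
  have hblen := block_len hmem hb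
  exact valAux_eq b.length L b.length b (m + 1) le_rfl (by omega) le_rfl

lemma iter_opow_pos {x : Ordinal.{0}} (hx : 0 < x) (j : ℕ) :
    0 < (fun β => Ordinal.omega0 ^ β)^[j] x := by
  cases j with
  | zero => exact hx
  | succ j =>
    rw [Function.iterate_succ_apply']
    exact Ordinal.opow_pos _ Ordinal.omega0_pos

lemma val_pos {A : Word} (hA : A ≠ []) (n : ℕ) : 0 < val A n := by
  cases hmin : A.min? with
  | none => exact absurd (List.min?_eq_none_iff.1 hmin) hA
  | some m =>
    rw [val_def hA hmin]
    refine iter_opow_pos (wsum_pos ?_) _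
    have := List.splitOnP_ne_nil (· == m) A
    intro h
    exact this (List.map_eq_nil_iff.1 h)

lemma val_eq_zero_iff {A : Word} {n : ℕ} : val A n = 0 ↔ A = [] := by
  constructor
  · intro h
    by_contra hA
    exact absurd h (ne_of_gt (val_pos hA n))
  · rintro rfl; rfl

lemma val_unfold {A : Word} {n : ℕ} (hA : A ≠ []) (h : ∀ x ∈ A, n + 1 ≤ x) :
    val A n = Ordinal.omega0 ^ val A (n + 1) := by
  cases hmin : A.min? with
  | none => exact absurd (List.min?_eq_none_iff.1 hmin) hA
  | some m =>
    have hmem : m ∈ A := (List.min?_eq_some_iff'.1 hmin).1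
    have hnm : n + 1 ≤ m := h m hmem
    rw [val_def hA hmin n, val_def hA hmin (n + 1),
      show m - n = (m - (n + 1)) + 1 by omega, Function.iterate_succ_apply']

lemma val_level {A : Word} {j : ℕ} (hA : A ≠ []) (h : ∀ x ∈ A, j ≤ x) :
    ∀ (d n : ℕ), n + d = j → val A n = (fun β => Ordinal.omega0 ^ β)^[d] (val A j) := by
  intro d
  induction d with
  | zero => intro n hn; rw [show n = j by omega]; rfl
  | succ d ih =>
    intro n hn
    have h1 : val A n = Ordinal.omega0 ^ val A (n + 1) :=
      val_unfold hA (fun x hx => le_trans (by omega) (h x hx))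
    rw [h1, ih (n + 1) (by omega), Function.iterate_succ_apply']

lemma core_eval {A : Word} {j : ℕ} (hA : A ≠ []) (h : ∀ x ∈ A, j ≤ x) :
    val A j = wsum ((A.splitOn j).map (fun b => val b (j + 1))) := by
  cases hmin : A.min? with
  | none => exact absurd (List.min?_eq_none_iff.1 hmin) hA
  | some m =>
    have hmem : m ∈ A := (List.min?_eq_some_iff'.1 hmin).1
    have hmle : ∀ x ∈ A, m ≤ x := (List.min?_eq_some_iff'.1 hmin).2
    have hjm : j ≤ m := h m hmem
    rcases eq_or_lt_of_le hjm with rfl | hlt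
    · rw [val_def hA hmin j, Nat.sub_self]
      rfl
    · have hnotmem : j ∉ A := fun hj => absurd (hmle j hj) (by omega)
      rw [splitOn_eq_msplit, msplit_not_mem hnotmem]
      have : wsum ([A].map fun b => val b (j + 1)) = Ordinal.omega0 ^ val A (j + 1) := by
        simp [wsum]
      rw [this]
      exact val_unfold hA (fun x hx => by have := hmle x hx; omega)

lemma cmp_shift {b b' : Word} {n : ℕ} (hb : ∀ x ∈ b, n + 1 ≤ x)
    (hb' : ∀ x ∈ b', n + 1 ≤ x) :
    (val b n ≤ val b' n ↔ val b (n + 1) ≤ val b' (n + 1)) := by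
  by_cases h1 : b = []
  · subst h1
    simp only [val_nil]
    exact iff_of_true zero_le zero_le
  · by_cases h2 : b' = []
    · subst h2
      simp only [val_nil]
      refine iff_of_false ?_ ?_
      · exact not_le.2 (val_pos h1 n)
      · exact not_le.2 (val_pos h1 (n + 1))
    · rw [val_unfold h1 hb, val_unfold h2 hb']
      exact Ordinal.opow_le_opow_iff_right Ordinal.one_lt_omega0

lemma cmp_level {b b' : Word} : ∀ (d n : ℕ), (∀ x ∈ b, n + d ≤ x) →
    (∀ x ∈ b', n + d ≤ x) →
    (val b n ≤ val b' n ↔ val b (n + d) ≤ val b' (n + d)) := by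
  intro d
  induction d with
  | zero => intro n _ _; rw [Nat.add_zero]
  | succ d ih =>
    intro n hb hb'
    have s1 : val b n ≤ val b' n ↔ val b (n + 1) ≤ val b' (n + 1) :=
      cmp_shift (fun x hx => le_trans (by omega) (hb x hx))
        (fun x hx => le_trans (by omega) (hb' x hx))
    have s2 := ih (n + 1) (fun x hx => le_trans (by omega) (hb x hx))
      (fun x hx => le_trans (by omega) (hb' x hx))
    rw [s1, s2, show n + 1 + d = n + (d + 1) by omega]

lemma val_cmp_wsum {A B : Word} {m : ℕ} (hmin : (A ++ B).min? = some m) :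
    (val A 0 ≤ val B 0 ↔
      wsum ((A.splitOn m).map (fun b => val b (m + 1))) ≤
      wsum ((B.splitOn m).map (fun b => val b (m + 1)))) := by
  have hmem : m ∈ A ++ B := (List.min?_eq_some_iff'.1 hmin).1
  have hmle : ∀ x ∈ A ++ B, m ≤ x := (List.min?_eq_some_iff'.1 hmin).2
  have hA : ∀ x ∈ A, m ≤ x := fun x hx => hmle x (List.mem_append_left _ hx)
  have hB : ∀ x ∈ B, m ≤ x := fun x hx => hmle x (List.mem_append_right _ hx)
  have step1 : val A 0 ≤ val B 0 ↔ val A m ≤ val B m := by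
    have := cmp_level (b := A) (b' := B) m 0 (by simpa using hA) (by simpa using hB)
    simpa using this
  rw [step1]
  by_cases h1 : A = []
  · subst h1
    have hBne : B ≠ [] := by
      intro h; rw [h] at hmem; exact absurd hmem (List.not_mem_nil)
    refine iff_of_true (by simpa using zero_le _) ?_
    rw [List.splitOn_nil]
    have : wsum (([([] : Word)]).map fun b => val b (m + 1)) = 1 := by
      simp [wsum]
    rw [this]
    refine one_le_wsum ?_
    intro h
    exact (List.splitOnP_ne_nil (· == m) B) (List.map_eq_nil_iff.1 h)
  · by_cases h2 : B = []
    · subst h2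
      have hmA : m ∈ A := by simpa using hmem
      refine iff_of_false (not_le.2 (by simpa using val_pos h1 m)) (not_le.2 ?_)
      rw [List.splitOn_nil]
      have e1 : wsum (([([] : Word)]).map fun b => val b (m + 1)) = 1 := by
        simp [wsum]
      rw [e1]
      have h2 := msplit_len_two hmA
      rw [← splitOn_eq_msplit] at h2
      obtain ⟨x, y, l, hxy⟩ : ∃ x y l, A.splitOn m = x :: y :: l := by
        cases hs : A.splitOn m with
        | nil => rw [hs] at h2; simp at h2
        | cons x t =>
          cases t with
          | nil => rw [hs] at h2; simp at h2
          | cons y l => exact ⟨x, y, l, rfl⟩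
      rw [hxy]
      calc (1 : Ordinal.{0}) < 2 := by norm_num
      _ ≤ _ := two_le_wsum
    · rw [core_eval h1 hA, core_eval h2 hB]
/-! ### The order `leAux` is represented by the valuation -/

lemma leAux_refl (f : ℕ) (A : Word) : leAux (f + 1) A A := by
  by_cases hA : A = []
  · exact Or.inl ⟨hA, hA⟩
  · refine Or.inr ?_
    intro m _ MA MB hMA hMB
    exact hMB.2 MA hMA.1

lemma pair_bound {A B : Word} {m : ℕ} (hmem : m ∈ A ++ B)
    {x y : Word} (hx : x = [] ∨ x ∈ A.splitOn m ∨ x ∈ B.splitOn m)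
    (hy : y = [] ∨ y ∈ A.splitOn m ∨ y ∈ B.splitOn m) (hxy : x ≠ y) :
    x.length + y.length + 1 ≤ A.length + B.length := by
  rw [splitOn_eq_msplit] at hx hy
  rw [splitOn_eq_msplit] at hx hy
  have hsA := msplit_sumlen m A
  have hsB := msplit_sumlen m B
  have hlA : 1 ≤ (msplit m A).length := List.length_pos_iff.2 (msplit_ne_nil m A)
  have hlB : 1 ≤ (msplit m B).length := List.length_pos_iff.2 (msplit_ne_nil m B)
  have h2 : 2 ≤ (msplit m A).length ∨ 2 ≤ (msplit m B).length := by
    rcases List.mem_append.1 hmem with h | h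
    · exact Or.inl (msplit_len_two h)
    · exact Or.inr (msplit_len_two h)
  have hnil : ([] : Word).length = 0 := rfl
  rcases hx with rfl | hx | hx
  · rcases hy with rfl | hy | hy
    · exact absurd rfl hxy
    · have := mem_len_le_sum hy
      rcases h2 with h | h <;> omega
    · have := mem_len_le_sum hy
      rcases h2 with h | h <;> omega
  · rcases hy with rfl | hy | hy
    · have := mem_len_le_sum hx
      rcases h2 with h | h <;> omega
    · obtain ⟨hs, hl⟩ := two_mem_sum hx hy hxy
      omega
    · have h1 := mem_len_le_sum hx
      have h2' := mem_len_le_sum hy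
      rcases h2 with h | h <;> omega
  · rcases hy with rfl | hy | hy
    · have := mem_len_le_sum hx
      rcases h2 with h | h <;> omega
    · have h1 := mem_len_le_sum hx
      have h2' := mem_len_le_sum hy
      rcases h2 with h | h <;> omega
    · obtain ⟨hs, hl⟩ := two_mem_sum hx hy hxy
      omega

lemma leAux_iff_val : ∀ (n : ℕ) (A B : Word) (fuel : ℕ), A.length + B.length ≤ n →
    A.length + B.length < fuel → (leAux fuel A B ↔ val A 0 ≤ val B 0) := by
  intro n
  induction n using Nat.strong_induction_on with
  | _ n ih =>
    intro A B fuel hn hfuel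
    obtain ⟨f, rfl⟩ : ∃ f, fuel = f + 1 := ⟨fuel - 1, by omega⟩
    simp only [leAux]
    by_cases hAB : A = [] ∧ B = []
    · obtain ⟨rfl, rfl⟩ := hAB
      exact iff_of_true (Or.inl ⟨rfl, rfl⟩) le_rfl
    · cases hmin : (A ++ B).min? with
      | none =>
        rw [List.min?_eq_none_iff] at hmin
        exact absurd (List.append_eq_nil_iff.1 hmin) hAB
      | some m =>
        have hmem : m ∈ A ++ B := (List.min?_eq_some_iff'.1 hmin).1
        have hmle : ∀ x ∈ A ++ B, m ≤ x := (List.min?_eq_some_iff'.1 hmin).2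
        have hf1 : 1 ≤ A.length + B.length := by
          rcases List.mem_append.1 hmem with h | h
          · have := List.length_pos_iff.2 (List.ne_nil_of_mem h); omega
          · have := List.length_pos_iff.2 (List.ne_nil_of_mem h); omega
        set v : Word → Ordinal.{0} := fun b => val b (m + 1) with hv
        set L : List Word := [] :: (A.splitOn m ++ B.splitOn m) with hL
        have hLmem : ∀ x ∈ L, x = [] ∨ x ∈ A.splitOn m ∨ x ∈ B.splitOn m := by
          intro x hx
          rcases List.mem_cons.1 hx with rfl | hx
          · exact Or.inl rfl
          · rcases List.mem_append.1 hx with h | h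
            · exact Or.inr (Or.inl h)
            · exact Or.inr (Or.inr h)
        have hsym : ∀ x, (x ∈ A.splitOn m ∨ x ∈ B.splitOn m) → ∀ s ∈ x, m + 1 ≤ s := by
          intro x hx s hs
          rcases hx with h | h
          · obtain ⟨h1, h2⟩ := block_sym h s hs
            have := hmle s (List.mem_append_left _ h1)
            omega
          · obtain ⟨h1, h2⟩ := block_sym h s hs
            have := hmle s (List.mem_append_right _ h1)
            omega
        have Hrep : ∀ x ∈ L, ∀ y ∈ L, (leAux f x y ↔ v x ≤ v y) := by
          intro x hx y hy
          by_cases hxy : x = y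
          · subst hxy
            obtain ⟨g, rfl⟩ : ∃ g, f = g + 1 := ⟨f - 1, by omega⟩
            exact iff_of_true (leAux_refl g x) le_rfl
          · have hbound := pair_bound hmem (hLmem x hx) (hLmem y hy) hxy
            have hiff : leAux f x y ↔ val x 0 ≤ val y 0 :=
              ih (x.length + y.length) (by omega) x y f le_rfl (by omega)
            have hx' : ∀ s ∈ x, 0 + (m + 1) ≤ s := by
              intro s hs
              rcases hLmem x hx with rfl | h
              · exact absurd hs (List.not_mem_nil)
              · simpa using hsym x h s hs
            have hy' : ∀ s ∈ y, 0 + (m + 1) ≤ s := by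
              intro s hs
              rcases hLmem y hy with rfl | h
              · exact absurd hs (List.not_mem_nil)
              · simpa using hsym y h s hs
            rw [hiff]
            have hlev := cmp_level (b := x) (b' := y) (m + 1) 0 hx' hy'
            simpa [hv] using hlev
        have hsubA : ∀ z ∈ A.splitOn m, z ∈ L :=
          fun z hz => List.mem_cons_of_mem _ (List.mem_append_left _ hz)
        have hsubB : ∀ z ∈ B.splitOn m, z ∈ L :=
          fun z hz => List.mem_cons_of_mem _ (List.mem_append_right _ hz)
        have hCMP := val_cmp_wsum (A := A) (B := B) hmin
        constructor
        · rintro (⟨h1, h2⟩ | H)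
          · exact absurd ⟨h1, h2⟩ hAB
          · have hlex := H m rfl (pick v (A.splitOn m)) (pick v (B.splitOn m))
              (pick_isLexMax Hrep _ hsubA) (pick_isLexMax Hrep _ hsubB)
            have hlv := (lexLe_iff_lexval Hrep _ _
              (fun z hz => hsubA z ((pick_sublist v _).subset hz))
              (fun z hz => hsubB z ((pick_sublist v _).subset hz))).1 hlex
            rw [pick_map, pick_map] at hlv
            have hws := (lexval_iff_wsum _ _ (maxseq_nonInc _) (maxseq_nonInc _)).1 hlv
            rw [maxseq_wsum, maxseq_wsum] at hws
            exact hCMP.2 hws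
        · intro hval
          refine Or.inr ?_
          intro m' hm' MA MB hMA hMB
          have hmm : m' = m := (Option.some.inj hm').symm
          subst hmm
          have hMAv : MA.map v = maxseq ((A.splitOn m').map v) :=
            isLexMax_vals Hrep hsubA hMA
          have hMBv : MB.map v = maxseq ((B.splitOn m').map v) :=
            isLexMax_vals Hrep hsubB hMB
          refine (lexLe_iff_lexval Hrep MA MB
            (fun z hz => hsubA z (hMA.1.subset hz))
            (fun z hz => hsubB z (hMB.1.subset hz))).2 ?_
          rw [hMAv, hMBv]
          refine (lexval_iff_wsum _ _ (maxseq_nonInc _) (maxseq_nonInc _)).2 ?_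
          rw [maxseq_wsum, maxseq_wsum]
          exact hCMP.1 hval
/-! ### Appending a letter acts on values via an explicit ordinal function -/

lemma lastExp_aux {β e e' : Ordinal.{0}} (h : e < e') (β' : Ordinal.{0}) :
    β + Ordinal.omega0 ^ e ≠ β' + Ordinal.omega0 ^ e' := by
  intro heq
  have hne : (Ordinal.omega0 : Ordinal.{0}) ^ e' ≠ 0 :=
    Ordinal.opow_ne_zero _ Ordinal.omega0_ne_zero
  have hR : β % (Ordinal.omega0 ^ e') + Ordinal.omega0 ^ e < Ordinal.omega0 ^ e' := by
    refine Ordinal.principal_add_omega0_opow _ (Ordinal.mod_lt _ hne) ?_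
    exact (Ordinal.opow_lt_opow_iff_right Ordinal.one_lt_omega0).2 h
  have hR0 : β % (Ordinal.omega0 ^ e') + Ordinal.omega0 ^ e ≠ 0 := by
    intro h0
    have h1 : 0 < Ordinal.omega0 ^ e := Ordinal.opow_pos _ Ordinal.omega0_pos
    have h2 : Ordinal.omega0 ^ e ≤ β % (Ordinal.omega0 ^ e') + Ordinal.omega0 ^ e :=
      le_add_self
    rw [h0] at h2
    exact absurd (le_antisymm h2 zero_le) (ne_of_gt h1)
  have lhs : β + Ordinal.omega0 ^ e =
      Ordinal.omega0 ^ e' * (β / Ordinal.omega0 ^ e') +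
        (β % (Ordinal.omega0 ^ e') + Ordinal.omega0 ^ e) := by
    rw [← add_assoc, Ordinal.div_add_mod]
  have rhs : β' + Ordinal.omega0 ^ e' =
      Ordinal.omega0 ^ e' * (β' / Ordinal.omega0 ^ e' + 1) := by
    conv_lhs => rw [← Ordinal.div_add_mod β' (Ordinal.omega0 ^ e')]
    rw [add_assoc, Ordinal.add_omega0_opow (Ordinal.mod_lt _ hne), mul_add, mul_one]
  have hmods : (β + Ordinal.omega0 ^ e) % (Ordinal.omega0 ^ e') =
      β % (Ordinal.omega0 ^ e') + Ordinal.omega0 ^ e := by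
    rw [lhs, Ordinal.mul_add_mod_self, Ordinal.mod_eq_of_lt hR]
  have hmods' : (β' + Ordinal.omega0 ^ e') % (Ordinal.omega0 ^ e') = 0 := by
    rw [rhs, ← add_zero (Ordinal.omega0 ^ e' * (β' / Ordinal.omega0 ^ e' + 1)),
      Ordinal.mul_add_mod_self, Ordinal.zero_mod]
  rw [heq, hmods'] at hmods
  exact hR0 hmods.symm

lemma lastExp_unique {α β e β' e' : Ordinal.{0}}
    (h1 : β + Ordinal.omega0 ^ e = α) (h2 : β' + Ordinal.omega0 ^ e' = α) : e = e' := by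
  rcases lt_trichotomy e e' with h | h | h
  · exact absurd (h1.trans h2.symm) (lastExp_aux h β')
  · exact h
  · exact absurd (h2.trans h1.symm) (lastExp_aux h β)

/-- The last exponent in the Cantor normal form. -/
noncomputable def lastExp (α : Ordinal.{0}) : Ordinal.{0} :=
  if h : ∃ e β : Ordinal.{0}, β + Ordinal.omega0 ^ e = α then h.choose else 0

lemma lastExp_eq {α β e : Ordinal.{0}} (h : β + Ordinal.omega0 ^ e = α) :
    lastExp α = e := by
  have hex : ∃ e β : Ordinal.{0}, β + Ordinal.omega0 ^ e = α := ⟨e, β, h⟩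
  rw [lastExp, dif_pos hex]
  obtain ⟨β₀, h₀⟩ := hex.choose_spec
  exact lastExp_unique h₀ h

/-- The action of appending a letter at distance `d` below the current level. -/
noncomputable def gfun : ℕ → Ordinal.{0} → Ordinal.{0}
  | 0, α => if α = 0 then 2 else α + 1
  | (d + 1), α =>
      if α = 0 then (fun β => Ordinal.omega0 ^ β)^[d + 1] 2
      else α + Ordinal.omega0 ^ (gfun d (lastExp α))

lemma gfun_zero (d : ℕ) : gfun d 0 = (fun β => Ordinal.omega0 ^ β)^[d] 2 := by
  cases d with
  | zero => simp [gfun]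
  | succ d => simp [gfun]

lemma gfun_gt (d : ℕ) (α : Ordinal.{0}) : α < gfun d α := by
  cases d with
  | zero =>
    rw [gfun]
    split_ifs with h
    · rw [h]; norm_num
    · exact lt_add_of_pos_right _ zero_lt_one
  | succ d =>
    rw [gfun]
    split_ifs with h
    · rw [h]; exact iter_opow_pos (by norm_num) _
    · exact lt_add_of_pos_right _ (Ordinal.opow_pos _ Ordinal.omega0_pos)

lemma val_append (k : ℕ) : ∀ (N : ℕ) (A : Word) (n : ℕ), A.length + (k - n) ≤ N →
    (∀ x ∈ A, n ≤ x) → n ≤ k → val (A ++ [k]) n = gfun (k - n) (val A n) := by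
  intro N
  induction N using Nat.strong_induction_on with
  | _ N ih =>
    intro A n hN hA hnk
    by_cases hAnil : A = []
    · subst hAnil
      have hmin : ([k] : Word).min? = some k := rfl
      have hk : ([] : Word) ++ [k] = [k] := rfl
      rw [hk, val_def (by simp) hmin n, val_nil, gfun_zero]
      congr 1
      have hsplit : ([k] : Word).splitOn k = [[], []] := by
        rw [splitOn_eq_msplit]; simp [msplit]
      rw [hsplit]
      simp only [List.map_cons, List.map_nil, wsum_cons, wsum_nil, val_nil,
        Ordinal.opow_zero, add_zero]
      norm_num
    · have hApos : 1 ≤ A.length := List.length_pos_iff.2 hAnil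
      rcases eq_or_lt_of_le hnk with rfl | hnk'
      · -- k = n
        have hmin : (A ++ [n]).min? = some n := by
          rw [List.min?_eq_some_iff']
          refine ⟨List.mem_append_right _ (by simp), ?_⟩
          intro b hb
          rcases List.mem_append.1 hb with h | h
          · exact hA b h
          · simp at h; omega
        have hsplit : (A ++ [n]).splitOn n = A.splitOn n ++ [[]] := by
          rw [splitOn_eq_msplit, splitOn_eq_msplit, msplit_append_same]
        rw [Nat.sub_self, val_def (by simp) hmin n, Nat.sub_self]
        simp only [Function.iterate_zero, id_eq]
        rw [hsplit, List.map_append, wsum_append]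
        have h2 : wsum (([([] : Word)]).map fun b => val b (n + 1)) = 1 := by
          simp [wsum]
        rw [h2]
        simp only [gfun]
        rw [if_neg (ne_of_gt (val_pos hAnil n)), core_eval hAnil hA]
      · -- n < k
        by_cases hstep : ∀ x ∈ A, n + 1 ≤ x
        · have hne : A ++ [k] ≠ [] := by simp
          have h1 : val (A ++ [k]) n = Ordinal.omega0 ^ val (A ++ [k]) (n + 1) := by
            refine val_unfold hne ?_
            intro x hx
            rcases List.mem_append.1 hx with h | h
            · exact hstep x h
            · simp at h; omega
          have h2 : val A n = Ordinal.omega0 ^ val A (n + 1) := val_unfold hAnil hstep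
          have hIH : val (A ++ [k]) (n + 1) = gfun (k - (n + 1)) (val A (n + 1)) :=
            ih (N - 1) (by omega) A (n + 1) (by omega) hstep (by omega)
          obtain ⟨d, hd⟩ : ∃ d, k - n = d + 1 := ⟨k - n - 1, by omega⟩
          rw [h1, hIH, h2, hd]
          simp only [gfun]
          rw [if_neg (Ordinal.opow_ne_zero _ Ordinal.omega0_ne_zero)]
          have hle : lastExp (Ordinal.omega0 ^ val A (n + 1)) = val A (n + 1) :=
            lastExp_eq (by rw [zero_add])
          rw [hle, show k - (n + 1) = d by omega]
          rw [Ordinal.add_omega0_opow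
            ((Ordinal.opow_lt_opow_iff_right Ordinal.one_lt_omega0).2 (gfun_gt d _))]
        · -- n occurs in A
          push_neg at hstep
          obtain ⟨x0, hx0, hx0lt⟩ := hstep
          have hx0n : x0 = n := by
            have := hA x0 hx0
            omega
          have hnA : n ∈ A := hx0n ▸ hx0
          have hmin : (A ++ [k]).min? = some n := by
            rw [List.min?_eq_some_iff']
            refine ⟨List.mem_append_left _ hnA, ?_⟩
            intro b hb
            rcases List.mem_append.1 hb with h | h
            · exact hA b h
            · simp at h; omega
          obtain ⟨l, b, hsa, hsk⟩ := msplit_append_ne (show k ≠ n by omega) A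
          have hval : val (A ++ [k]) n =
              wsum ((l ++ [b ++ [k]]).map fun z => val z (n + 1)) := by
            rw [val_def (by simp) hmin n, Nat.sub_self]
            simp only [Function.iterate_zero, id_eq]
            rw [splitOn_eq_msplit, hsk]
          have hbmem : b ∈ msplit n A := by
            rw [hsa]; exact List.mem_append_right _ (by simp)
          have hbsym : ∀ x ∈ b, n + 1 ≤ x := by
            intro x hx
            obtain ⟨hxa, hxn⟩ := msplit_mem hbmem x hx
            have := hA x hxa
            omega
          have hblen : b.length < A.length :=
            block_len hnA (by rw [splitOn_eq_msplit]; exact hbmem)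
          have hIH : val (b ++ [k]) (n + 1) = gfun (k - (n + 1)) (val b (n + 1)) :=
            ih (N - 1) (by omega) b (n + 1) (by omega) hbsym (by omega)
          have hcore : val A n = wsum ((l ++ [b]).map fun z => val z (n + 1)) := by
            rw [core_eval hAnil hA, splitOn_eq_msplit, hsa]
          have hP : val A n = wsum (l.map fun z => val z (n + 1)) +
              Ordinal.omega0 ^ val b (n + 1) := by
            rw [hcore, List.map_append, wsum_append]
            simp [wsum]
          obtain ⟨d, hd⟩ : ∃ d, k - n = d + 1 := ⟨k - n - 1, by omega⟩
          rw [hval, List.map_append, wsum_append, hd]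
          simp only [List.map_cons, List.map_nil, wsum_cons, wsum_nil, add_zero, hIH]
          simp only [gfun]
          rw [if_neg (ne_of_gt (val_pos hAnil n)), lastExp_eq hP.symm, hP,
            show k - (n + 1) = d by omega, add_assoc,
            Ordinal.add_omega0_opow
              ((Ordinal.opow_lt_opow_iff_right Ordinal.one_lt_omega0).2 (gfun_gt d _))]

theorem append_symbol_congruence (k : ℕ) (A B : Word) (h : Wequiv A B) :
    Wequiv (A ++ [k]) (B ++ [k]) := by
  obtain ⟨h1, h2⟩ := h
  have e1 : val A 0 ≤ val B 0 :=
    (leAux_iff_val (A.length + B.length) A B _ le_rfl (by omega)).1 h1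
  have e2 : val B 0 ≤ val A 0 :=
    (leAux_iff_val (B.length + A.length) B A _ le_rfl (by omega)).1 h2
  have heq : val A 0 = val B 0 := le_antisymm e1 e2
  have f1 : val (A ++ [k]) 0 = gfun (k - 0) (val A 0) :=
    val_append k (A.length + k) A 0 (by omega) (fun x _ => Nat.zero_le x) (Nat.zero_le k)
  have f2 : val (B ++ [k]) 0 = gfun (k - 0) (val B 0) :=
    val_append k (B.length + k) B 0 (by omega) (fun x _ => Nat.zero_le x) (Nat.zero_le k)
  have hfin : val (A ++ [k]) 0 = val (B ++ [k]) 0 := by rw [f1, f2, heq]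
  constructor
  · exact (leAux_iff_val ((A ++ [k]).length + (B ++ [k]).length) _ _ _ le_rfl
      (Nat.lt_succ_self _)).2 (le_of_eq hfin)
  · exact (leAux_iff_val ((B ++ [k]).length + (A ++ [k]).length) _ _ _ le_rfl
      (Nat.lt_succ_self _)).2 (le_of_eq hfin.symm)
end
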